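/- arXiv:2311.04706 — 7 statements merged into one kernel-verified Lean document; each statement's English description precedes it below -/
import Mathlib

section
/- If A is an n×n Metzler matrix (nonnegative off-diagonal entries) that is irreducible, and x : [0,∞) → ℝ^n solves dx/dt = A x with x(0) ≥ 0 and x(0) ≠ 0, then x(t) has all entries strictly positive for every t > 0. -/
open Matrix
open scoped Nat

/-- A square real matrix is Metzler if its off-diagonal entries are nonnegative. -/
def Metzler {n : ℕ} (A : Matrix (Fin n) (Fin n) ℝ) : Prop :=
  ∀ i j, i ≠ j → 0 ≤ A i j

/-- A square real matrix is irreducible if its associated directed graph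
(edge `j → i` whenever `A i j ≠ 0`, `i ≠ j`) is strongly connected. -/
def Irred {n : ℕ} (A : Matrix (Fin n) (Fin n) ℝ) : Prop :=
  ∀ i j : Fin n, i ≠ j → Relation.TransGen (fun a b : Fin n => a ≠ b ∧ A b a ≠ 0) i j

section Aux

attribute [local instance] Matrix.linftyOpSemiNormedRing Matrix.linftyOpNormedRing
  Matrix.linftyOpNormedAlgebra

variable {m : ℕ}

/-- evaluation at an entry, as a continuous linear map -/
noncomputable def entryCLM (i j : Fin m) : Matrix (Fin m) (Fin m) ℝ →L[ℝ] ℝ :=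
  LinearMap.toContinuousLinearMap
    { toFun := fun M => M i j
      map_add' := fun _ _ => rfl
      map_smul' := fun _ _ => rfl }

@[simp] lemma entryCLM_apply (i j : Fin m) (M : Matrix (Fin m) (Fin m) ℝ) :
    entryCLM i j M = M i j := rfl

lemma entry_pow_nonneg {M : Matrix (Fin m) (Fin m) ℝ} (h : ∀ i j, 0 ≤ M i j) :
    ∀ (k : ℕ) (i j), 0 ≤ (M ^ k) i j := by
  intro k
  induction k with
  | zero =>
    intro i j
    simp only [pow_zero, Matrix.one_apply]
    split <;> norm_num
  | succ k ih =>
    intro i j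
    rw [pow_succ, Matrix.mul_apply]
    exact Finset.sum_nonneg fun a _ => mul_nonneg (ih i a) (h a j)

lemma exists_entry_pow_pos {M : Matrix (Fin m) (Fin m) ℝ} (h0 : ∀ i j, 0 ≤ M i j)
    {i j : Fin m} (h : Relation.TransGen (fun a b : Fin m => 0 < M b a) j i) :
    ∃ k, 0 < (M ^ k) i j := by
  induction h with
  | single h => exact ⟨1, by simpa using h⟩
  | tail hjb hbc ih =>
    obtain ⟨k, hk⟩ := ih
    refine ⟨k + 1, ?_⟩
    rw [pow_succ', Matrix.mul_apply]
    refine Finset.sum_pos' (fun a _ => mul_nonneg (h0 _ _) (entry_pow_nonneg h0 k a j)) ?_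
    exact ⟨_, Finset.mem_univ _, mul_pos hbc hk⟩

lemma exp_entry_pos {M : Matrix (Fin m) (Fin m) ℝ} (h0 : ∀ i j, 0 ≤ M i j)
    (i j : Fin m) (hk : ∃ k, 0 < (M ^ k) i j) :
    0 < NormedSpace.exp M i j := by
  obtain ⟨k, hk⟩ := hk
  have hsum : HasSum (fun n : ℕ => ((n ! : ℝ)⁻¹ : ℝ) • M ^ n) (NormedSpace.exp M) := by
    rw [NormedSpace.exp_eq_tsum ℝ]
    exact (NormedSpace.expSeries_summable' (𝕂 := ℝ) M).hasSum
  have h2 : HasSum (fun n : ℕ => ((n ! : ℝ)⁻¹ : ℝ) * (M ^ n) i j)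
      (NormedSpace.exp M i j) := by
    have := hsum.mapL (entryCLM i j)
    simpa [smul_eq_mul] using this
  rw [← h2.tsum_eq]
  refine Summable.tsum_pos h2.summable (fun n => ?_) k ?_
  · exact mul_nonneg (by positivity) (entry_pow_nonneg h0 n i j)
  · exact mul_pos (by positivity) hk

lemma solution_formula {A : Matrix (Fin m) (Fin m) ℝ} {x : ℝ → Fin m → ℝ}
    (hx : ∀ t : ℝ, HasDerivAt x (A.mulVec (x t)) t) (t : ℝ) :
    x t = (NormedSpace.exp (t • A)).mulVec (x 0) := by
  set E : ℝ → Matrix (Fin m) (Fin m) ℝ := fun s => NormedSpace.exp ((-s) • A) with hE_def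
  have hE : ∀ s : ℝ, HasDerivAt E (-(A * E s)) s := by
    intro s
    have h1 := hasDerivAt_exp_smul_const' (𝕂 := ℝ) A (-s)
    have h2 : HasDerivAt (fun u : ℝ => -u) (-1 : ℝ) s := (hasDerivAt_id s).neg
    have h3 := h1.scomp s h2
    rw [show -(A * E s) = (-1 : ℝ) • (A * NormedSpace.exp ((-s) • A)) by simp [hE_def]]
    exact h3
  have hcomm : ∀ s : ℝ, A * E s = E s * A := by
    intro s
    exact (((Commute.refl A).smul_right (-s)).exp_right)
  have hgi : ∀ (i : Fin m) (s : ℝ),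
      HasDerivAt (fun u => ∑ j, E u i j * x u j) 0 s := by
    intro i s
    have hterm : ∀ j : Fin m, HasDerivAt (fun u => E u i j * x u j)
        ((-(A * E s)) i j * x s j + E s i j * (A.mulVec (x s)) j) s := by
      intro j
      have hEe : HasDerivAt (fun u => E u i j) ((-(A * E s)) i j) s := by
        have := (entryCLM i j).hasFDerivAt.comp_hasDerivAt s (hE s)
        simp [Function.comp_def] at this
        convert this using 1 <;> rfl
      have hxj : HasDerivAt (fun u => x u j) ((A.mulVec (x s)) j) s :=
        hasDerivAt_pi.1 (hx s) j
      exact hEe.mul hxj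
    have hsum := HasDerivAt.sum (u := (Finset.univ : Finset (Fin m))) (x := s) (fun j _ => hterm j)
    have hzero : ∑ j, ((-(A * E s)) i j * x s j + E s i j * (A.mulVec (x s)) j) = 0 := by
      rw [Finset.sum_add_distrib]
      have e1 : ∑ j, (-(A * E s)) i j * x s j = -(((A * E s).mulVec (x s)) i) := by
        simp [Matrix.mulVec, dotProduct, Finset.sum_neg_distrib]
      have e2 : ∑ j, E s i j * (A.mulVec (x s)) j = (((E s) * A).mulVec (x s)) i := by
        rw [← Matrix.mulVec_mulVec]
        simp [Matrix.mulVec, dotProduct]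
      rw [e1, e2, ← hcomm s]
      ring
    rw [hzero] at hsum
    simpa only [Finset.sum_fn] using hsum
  have hconst : ∀ i : Fin m, (∑ j, E t i j * x t j) = ∑ j, E 0 i j * x 0 j := by
    intro i
    exact is_const_of_deriv_eq_zero
      (fun s => (hgi i s).differentiableAt) (fun s => (hgi i s).deriv) t 0
  have hg : (E t).mulVec (x t) = x 0 := by
    funext i
    have h0 : E 0 = 1 := by simp [hE_def, NormedSpace.exp_zero]
    have := hconst i
    rw [h0] at this
    calc (E t).mulVec (x t) i = ∑ j, E t i j * x t j := by
          simp [Matrix.mulVec, dotProduct]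
      _ = ∑ j, (1 : Matrix (Fin m) (Fin m) ℝ) i j * x 0 j := this
      _ = x 0 i := by simp [Matrix.one_apply]
  have hinv : NormedSpace.exp (t • A) * E t = 1 := by
    rw [hE_def]; beta_reduce
    rw [← Matrix.exp_add_of_commute _ _ (((Commute.refl A).smul_left t).smul_right (-t))]
    simp [NormedSpace.exp_zero]
  calc x t = (1 : Matrix (Fin m) (Fin m) ℝ).mulVec (x t) := by simp
    _ = (NormedSpace.exp (t • A) * E t).mulVec (x t) := by rw [hinv]
    _ = (NormedSpace.exp (t • A)).mulVec ((E t).mulVec (x t)) := by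
        rw [Matrix.mulVec_mulVec]
    _ = (NormedSpace.exp (t • A)).mulVec (x 0) := by rw [hg]

theorem stmt0 {n : ℕ} (A : Matrix (Fin (n + 1)) (Fin (n + 1)) ℝ)
    (hM : Metzler A) (hirr : Irred A)
    (x : ℝ → Fin (n + 1) → ℝ)
    (hx : ∀ t : ℝ, HasDerivAt x (A.mulVec (x t)) t)
    (h0 : ∀ i, 0 ≤ x 0 i) (hne : x 0 ≠ 0) :
    ∀ t > (0 : ℝ), ∀ i, 0 < x t i := by
  intro t ht i
  -- the shifted matrix M = A + c • 1 has nonnegative entries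
  set c : ℝ := 1 + ∑ k, |A k k| with hc
  set M : Matrix (Fin (n + 1)) (Fin (n + 1)) ℝ := A + c • (1 : Matrix _ _ ℝ) with hMdef
  have habs : ∀ k, |A k k| ≤ ∑ l, |A l l| := fun k =>
    Finset.single_le_sum (f := fun l => |A l l|) (fun l _ => abs_nonneg _) (Finset.mem_univ k)
  have hMnn : ∀ i j, 0 ≤ M i j := by
    intro i j
    by_cases h : i = j
    · subst h
      simp only [hMdef, Matrix.add_apply, Matrix.smul_apply, Matrix.one_apply_eq, smul_eq_mul,
        mul_one]
      have h1 : -A i i ≤ |A i i| := neg_le_abs _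
      have := habs i
      rw [hc]; linarith
    · simp only [hMdef, Matrix.add_apply, Matrix.smul_apply, Matrix.one_apply_ne h,
        smul_eq_mul, mul_zero, add_zero]
      exact hM i j h
  have hMoff : ∀ a b : Fin (n + 1), a ≠ b → A b a ≠ 0 → 0 < M b a := by
    intro a b hab hA
    have hba : b ≠ a := fun h => hab h.symm
    have : M b a = A b a := by
      simp [hMdef, Matrix.one_apply_ne hba]
    rw [this]
    exact lt_of_le_of_ne (hM b a hba) (Ne.symm hA)
  -- entries of exp (t • M) are positive
  have htMnn : ∀ i j, 0 ≤ (t • M) i j := fun i j => by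
    simpa using mul_nonneg ht.le (hMnn i j)
  have hexpM : ∀ i j, 0 < NormedSpace.exp (t • M) i j := by
    intro i j
    refine exp_entry_pos htMnn i j ?_
    by_cases h : i = j
    · subst h
      exact ⟨0, by simp⟩
    · have hchain := hirr j i (fun hh => h hh.symm)
      refine exists_entry_pow_pos htMnn ?_
      refine Relation.TransGen.lift id ?_ j i hchain
      intro a b hab
      simp only [Function.onFun, id]
      simpa using mul_pos ht (hMoff a b hab.1 hab.2)
  -- relate exp (t • A) to exp (t • M)
  have hsplit : NormedSpace.exp (t • M) =
      NormedSpace.exp (t • A) * (Real.exp (t * c) • (1 : Matrix _ _ ℝ)) := by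
    have h1 : t • M = t • A + (t * c) • (1 : Matrix (Fin (n+1)) (Fin (n+1)) ℝ) := by
      rw [hMdef]; rw [smul_add, smul_smul]
    rw [h1, Matrix.exp_add_of_commute]
    · congr 1
      rw [← Algebra.algebraMap_eq_smul_one, ← Algebra.algebraMap_eq_smul_one, Real.exp_eq_exp_ℝ]
      exact (NormedSpace.algebraMap_exp_comm (𝕂 := ℝ) (𝔸 := Matrix (Fin (n+1)) (Fin (n+1)) ℝ) (t * c)).symm
    · exact Commute.smul_right (Commute.smul_left (Commute.one_right A) t) (t * c)
  have hexpA : ∀ i j, 0 < NormedSpace.exp (t • A) i j := by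
    intro i j
    have h1 : NormedSpace.exp (t • M) i j =
        NormedSpace.exp (t • A) i j * Real.exp (t * c) := by
      rw [hsplit]
      simp [Matrix.mul_apply, Matrix.smul_apply, Matrix.one_apply, Finset.sum_ite_eq,
        mul_comm]
    have h2 := hexpM i j
    rw [h1] at h2
    have he := Real.exp_pos (t * c)
    by_contra hle
    push_neg at hle
    nlinarith
  -- combine with solution formula
  rw [solution_formula hx t]
  obtain ⟨j0, hj0⟩ : ∃ j0, x 0 j0 ≠ 0 := by
    by_contra h
    push_neg at h
    exact hne (funext h)
  have hj0pos : 0 < x 0 j0 := lt_of_le_of_ne (h0 j0) (Ne.symm hj0)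
  show 0 < ∑ j, NormedSpace.exp (t • A) i j * x 0 j
  refine Finset.sum_pos' (fun j _ => mul_nonneg (hexpA i j).le (h0 j)) ?_
  exact ⟨j0, Finset.mem_univ j0, mul_pos (hexpA i j0) hj0pos⟩

end Aux
end

section
/- Let L be an n×n Metzler irreducible matrix with columns summing to 0. Then a positive vector δ spanning the kernel of L is given explicitly by δ_i = (-1)^{n-1} L*_{ii}, where L*_{ii} is the cofactor of the i-th diagonal entry of L; in particular each (-1)^{n-1} L*_{ii} > 0. -/
open Matrix Finset

/-- A strictly column diagonally dominant real matrix is nonsingular. -/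
lemma det_ne_zero_of_strict_dom {m : ℕ} (B : Matrix (Fin m) (Fin m) ℝ)
    (h : ∀ k, ∑ j ∈ Finset.univ.erase k, |B j k| < |B k k|) : B.det ≠ 0 := by
  intro hdet
  have hdet' : Bᵀ.det = 0 := by rw [Matrix.det_transpose]; exact hdet
  obtain ⟨y, hy0, hy⟩ := (Matrix.exists_mulVec_eq_zero_iff).mpr hdet'
  obtain ⟨j0, hj0⟩ := Function.ne_iff.mp hy0
  obtain ⟨k, -, hk⟩ := Finset.exists_max_image Finset.univ (fun j => |y j|) ⟨j0, mem_univ _⟩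
  have hm : 0 < |y k| := lt_of_lt_of_le (abs_pos.mpr (by simpa using hj0)) (hk j0 (mem_univ _))
  have hyk : ∑ j, B j k * y j = 0 := by
    have := congrFun hy k
    simpa [Matrix.mulVec, dotProduct, Matrix.transpose_apply] using this
  have hsplit : B k k * y k = -∑ j ∈ Finset.univ.erase k, B j k * y j := by
    have h2 := Finset.sum_erase_add Finset.univ (fun j => B j k * y j) (mem_univ k)
    rw [hyk] at h2
    linarith
  have hineq : |B k k| * |y k| ≤ (∑ j ∈ Finset.univ.erase k, |B j k|) * |y k| := by
    calc |B k k| * |y k| = |B k k * y k| := (abs_mul _ _).symm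
      _ = |∑ j ∈ Finset.univ.erase k, B j k * y j| := by rw [hsplit, abs_neg]
      _ ≤ ∑ j ∈ Finset.univ.erase k, |B j k * y j| := Finset.abs_sum_le_sum_abs _ _
      _ ≤ ∑ j ∈ Finset.univ.erase k, |B j k| * |y k| := by
          refine Finset.sum_le_sum fun j _ => ?_
          rw [abs_mul]
          exact mul_le_mul_of_nonneg_left (hk j (mem_univ _)) (abs_nonneg _)
      _ = (∑ j ∈ Finset.univ.erase k, |B j k|) * |y k| := by rw [Finset.sum_mul]
  have := mul_lt_mul_of_pos_right (h k) hm
  linarith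

/-- A strictly column diagonally dominant real matrix with positive diagonal
has positive determinant. -/
lemma det_pos_of_strict_dom {m : ℕ} (B : Matrix (Fin m) (Fin m) ℝ)
    (h : ∀ k, ∑ j ∈ Finset.univ.erase k, |B j k| < B k k) : 0 < B.det := by
  have hdiagpos : ∀ k, 0 < B k k := fun k =>
    lt_of_le_of_lt (Finset.sum_nonneg fun j _ => abs_nonneg _) (h k)
  set M : ℝ → Matrix (Fin m) (Fin m) ℝ :=
    fun s => Matrix.of fun j k => if j = k then B k k else s * B j k with hM
  have hdom : ∀ s ∈ Set.Icc (0:ℝ) 1, ∀ k,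
      ∑ j ∈ Finset.univ.erase k, |M s j k| < |M s k k| := by
    intro s hs k
    have h1 : |M s k k| = B k k := by
      have : M s k k = B k k := by simp [hM]
      rw [this]; exact abs_of_pos (hdiagpos k)
    rw [h1]
    refine lt_of_le_of_lt ?_ (h k)
    refine Finset.sum_le_sum fun j hj => ?_
    have hjk : j ≠ k := Finset.ne_of_mem_erase hj
    have hMe : M s j k = s * B j k := by simp [hM, hjk]
    rw [hMe, abs_mul]
    have : |s| ≤ 1 := by rw [abs_of_nonneg hs.1]; exact hs.2
    nlinarith [abs_nonneg (B j k), abs_nonneg s]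
  have hcont : Continuous fun s => (M s).det := by
    refine Continuous.matrix_det (continuous_matrix fun j k => ?_)
    simp only [hM, Matrix.of_apply]
    by_cases hjk : j = k
    · simp only [if_pos hjk]; fun_prop
    · simp only [if_neg hjk]; fun_prop
  have hne : ∀ s ∈ Set.Icc (0:ℝ) 1, (M s).det ≠ 0 := fun s hs =>
    det_ne_zero_of_strict_dom _ (hdom s hs)
  have h0 : (M 0).det = ∏ k, B k k := by
    have : M 0 = Matrix.diagonal fun k => B k k := by
      ext j k
      by_cases hjk : j = k <;> simp [hM, Matrix.diagonal, hjk]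
    rw [this, Matrix.det_diagonal]
  have h0pos : 0 < (M 0).det := by rw [h0]; exact Finset.prod_pos fun k _ => hdiagpos k
  have h1eq : M 1 = B := by
    ext j k
    by_cases hjk : j = k <;> simp [hM, hjk]
  by_contra hle
  push_neg at hle
  have h1ne : (M 1).det ≠ 0 := hne 1 ⟨zero_le_one, le_refl _⟩
  have h1lt : (M 1).det < 0 := by
    rw [h1eq] at h1ne ⊢
    exact lt_of_le_of_ne hle h1ne
  have : (0:ℝ) ∈ Set.Icc ((M 1).det) ((M 0).det) := ⟨le_of_lt h1lt, le_of_lt h0pos⟩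
  obtain ⟨s, hs, hfs⟩ := intermediate_value_Icc' (zero_le_one) (hcont.continuousOn) this
  exact hne s hs hfs

/-- A weakly column diagonally dominant real matrix (with nonneg diagonal)
has nonnegative determinant. -/
lemma det_nonneg_of_weak_dom {m : ℕ} (B : Matrix (Fin m) (Fin m) ℝ)
    (h : ∀ k, ∑ j ∈ Finset.univ.erase k, |B j k| ≤ B k k) : 0 ≤ B.det := by
  set C : ℝ → Matrix (Fin m) (Fin m) ℝ :=
    fun t => Matrix.of fun j k => if j = k then B k k + t else B j k with hC
  have hpos : ∀ t : ℝ, 0 < t → 0 < (C t).det := by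
    intro t ht
    refine det_pos_of_strict_dom _ fun k => ?_
    have : ∑ j ∈ Finset.univ.erase k, |C t j k| = ∑ j ∈ Finset.univ.erase k, |B j k| := by
      refine Finset.sum_congr rfl fun j hj => ?_
      simp [hC, Finset.ne_of_mem_erase hj]
    rw [this]
    have : C t k k = B k k + t := by simp [hC]
    rw [this]
    linarith [h k]
  have hcont : Continuous fun t => (C t).det := by
    refine Continuous.matrix_det (continuous_matrix fun j k => ?_)
    simp only [hC, Matrix.of_apply]
    by_cases hjk : j = k
    · simp only [if_pos hjk]; fun_prop
    · simp only [if_neg hjk]; fun_prop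
  have h0 : C 0 = B := by
    ext j k; by_cases hjk : j = k <;> simp [hC, hjk]
  have htends : Filter.Tendsto (fun t => (C t).det) (nhdsWithin 0 (Set.Ioi 0))
      (nhds ((C 0).det)) := (hcont.tendsto 0).mono_left nhdsWithin_le_nhds
  have hev : ∀ᶠ t in nhdsWithin 0 (Set.Ioi 0), 0 ≤ (C t).det := by
    filter_upwards [self_mem_nhdsWithin] with t ht
    exact le_of_lt (hpos t ht)
  have := ge_of_tendsto htends hev
  rwa [h0] at this

/-- Any vector in the left kernel of an irreducible Metzler matrix with zero
column sums is constant. -/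
lemma leftk_const {n : ℕ} (L : Matrix (Fin (n+1)) (Fin (n+1)) ℝ)
    (hM : Metzler L) (hirr : Irred L) (hcol : ∀ j, ∑ i, L i j = 0)
    (v : Fin (n+1) → ℝ) (hv : ∀ k, ∑ j, v j * L j k = 0) (a b : Fin (n+1)) : v a = v b := by
  obtain ⟨k, -, hk⟩ := Finset.exists_max_image Finset.univ v ⟨a, mem_univ a⟩
  -- step lemma
  have step : ∀ c d : Fin (n+1), v c = v k → c ≠ d → L d c ≠ 0 → v d = v k := by
    intro c d hc hcd hL
    have h1 : ∑ j, (v j - v k) * L j c = 0 := by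
      have h2 : ∑ j, v j * L j c = 0 := hv c
      have h3 : ∑ j, v k * L j c = 0 := by rw [← Finset.mul_sum, hcol c, mul_zero]
      calc ∑ j, (v j - v k) * L j c = ∑ j, (v j * L j c - v k * L j c) := by
            refine Finset.sum_congr rfl fun j _ => by ring
        _ = 0 := by rw [Finset.sum_sub_distrib, h2, h3, sub_zero]
    have h4 : ∑ j ∈ Finset.univ.erase c, (v j - v k) * L j c = 0 := by
      have h5 := Finset.sum_erase_add Finset.univ (fun j => (v j - v k) * L j c) (mem_univ c)
      rw [h1] at h5
      have : (v c - v k) * L c c = 0 := by rw [hc, sub_self, zero_mul]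
      linarith
    have h6 := (Finset.sum_eq_zero_iff_of_nonpos (fun j hj => by
      have hjc : j ≠ c := Finset.ne_of_mem_erase hj
      have := hk j (mem_univ j)
      have := hM j c hjc
      nlinarith)).mp h4
    have h7 := h6 d (Finset.mem_erase.mpr ⟨fun h => hcd h.symm, mem_univ d⟩)
    rcases mul_eq_zero.mp h7 with h | h
    · linarith [sub_eq_zero.mp h]
    · exact absurd h hL
  have hprop : ∀ c, Relation.TransGen (fun a b : Fin (n+1) => a ≠ b ∧ L b a ≠ 0) k c →
      v c = v k := by
    intro c hpath
    induction hpath with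
    | single h => exact step _ _ rfl h.1 h.2
    | tail hp h ih => exact step _ _ ih h.1 h.2
  have hall : ∀ c, v c = v k := by
    intro c
    by_cases hc : c = k
    · rw [hc]
    · exact hprop c (hirr k c (fun h => hc h.symm))
  rw [hall a, hall b]

/-- Each principal (n × n) submatrix of an irreducible Metzler matrix with zero
column sums is nonsingular. -/
lemma subdet_ne_zero {n : ℕ} (L : Matrix (Fin (n+1)) (Fin (n+1)) ℝ)
    (hM : Metzler L) (hirr : Irred L) (hcol : ∀ j, ∑ i, L i j = 0)
    (i : Fin (n+1)) : (L.submatrix i.succAbove i.succAbove).det ≠ 0 := by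
  intro hdet
  set σ : Fin n → Fin (n+1) := i.succAbove with hσ
  have hdet' : (L.submatrix σ σ)ᵀ.det = 0 := by rw [Matrix.det_transpose]; exact hdet
  obtain ⟨y, hy0, hy⟩ := (Matrix.exists_mulVec_eq_zero_iff).mpr hdet'
  obtain ⟨j0, hj0⟩ := Function.ne_iff.mp hy0
  obtain ⟨k0, -, hk0⟩ := Finset.exists_max_image Finset.univ (fun j => |y j|) ⟨j0, mem_univ _⟩
  have hm : 0 < |y k0| := lt_of_lt_of_le (abs_pos.mpr (by simpa using hj0)) (hk0 j0 (mem_univ _))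
  -- kernel equations
  have hy' : ∀ k : Fin n, ∑ j, L (σ j) (σ k) * y j = 0 := by
    intro k
    have := congrFun hy k
    simpa [Matrix.mulVec, dotProduct, Matrix.transpose_apply, Matrix.submatrix_apply] using this
  -- column sums over the embedded indices
  have herase : ∀ c : Fin (n+1), ∑ a ∈ Finset.univ.erase c, L a c = -L c c := by
    intro c
    have := Finset.sum_erase_add Finset.univ (fun a => L a c) (mem_univ c)
    rw [hcol c] at this
    linarith
  -- main claim at maximizers
  have claim : ∀ k : Fin n, |y k| = |y k0| →
      (L i (σ k) = 0 ∧ ∀ j : Fin n, L (σ j) (σ k) ≠ 0 → |y j| = |y k0|) := by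
    intro k hkmax
    set c := σ k with hc
    have hci : c ≠ i := Fin.succAbove_ne i k
    have hinj : Function.Injective σ := Fin.succAbove_right_injective
    -- ∑_{j ≠ k} L (σ j) c ≤ -L c c - L i c
    have hsum_bound : ∑ j ∈ Finset.univ.erase k, L (σ j) c ≤ -L c c - L i c := by
      have himg : ∑ j ∈ Finset.univ.erase k, L (σ j) c
          = ∑ a ∈ (Finset.univ.erase k).image σ, L a c := by
        rw [Finset.sum_image (fun x _ y _ h => hinj h)]
      rw [himg]
      have hsub : (Finset.univ.erase k).image σ ⊆ (Finset.univ.erase c).erase i := by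
        intro a ha
        obtain ⟨j, hj, rfl⟩ := Finset.mem_image.mp ha
        refine Finset.mem_erase.mpr ⟨(Fin.succAbove_ne i j).symm ∘ Eq.symm, ?_⟩
        · refine Finset.mem_erase.mpr ⟨?_, mem_univ _⟩
          intro h
          exact (Finset.mem_erase.mp hj).1 (hinj h)
      have hle : ∑ a ∈ (Finset.univ.erase k).image σ, L a c
          ≤ ∑ a ∈ (Finset.univ.erase c).erase i, L a c := by
        refine Finset.sum_le_sum_of_subset_of_nonneg hsub fun a ha _ => ?_
        exact hM a c (Finset.ne_of_mem_erase (Finset.mem_of_mem_erase ha))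
      have heq : ∑ a ∈ (Finset.univ.erase c).erase i, L a c = -L c c - L i c := by
        have := Finset.sum_erase_add (Finset.univ.erase c) (fun a => L a c)
          (Finset.mem_erase.mpr ⟨fun h => hci h.symm, mem_univ i⟩)
        rw [herase c] at this
        linarith
      linarith
    -- diagonal is nonpositive
    have hdiag : L c c ≤ 0 := by
      have : 0 ≤ ∑ a ∈ Finset.univ.erase c, L a c :=
        Finset.sum_nonneg fun a ha => hM a c (Finset.ne_of_mem_erase ha)
      rw [herase c] at this
      linarith
    -- split the kernel equation at j = k
    have hsplit : L c c * y k = -∑ j ∈ Finset.univ.erase k, L (σ j) c * y j := by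
      have h2 := Finset.sum_erase_add Finset.univ (fun j => L (σ j) c * y j) (mem_univ k)
      rw [hy' k] at h2
      rw [← hc] at h2
      linarith
    have hnonneg : ∀ j ∈ Finset.univ.erase k, 0 ≤ L (σ j) c := fun j hj =>
      hM (σ j) c (fun h => (Finset.ne_of_mem_erase hj) (hinj h))
    have hchain : (-L c c) * |y k0| ≤ ∑ j ∈ Finset.univ.erase k, L (σ j) c * |y j| := by
      calc (-L c c) * |y k0| = |L c c| * |y k| := by rw [abs_of_nonpos hdiag, hkmax]
        _ = |L c c * y k| := (abs_mul _ _).symm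
        _ = |∑ j ∈ Finset.univ.erase k, L (σ j) c * y j| := by rw [hsplit, abs_neg]
        _ ≤ ∑ j ∈ Finset.univ.erase k, |L (σ j) c * y j| := Finset.abs_sum_le_sum_abs _ _
        _ = ∑ j ∈ Finset.univ.erase k, L (σ j) c * |y j| := by
            refine Finset.sum_congr rfl fun j hj => ?_
            rw [abs_mul, abs_of_nonneg (hnonneg j hj)]
    have hupper : ∑ j ∈ Finset.univ.erase k, L (σ j) c * |y j|
        ≤ (-L c c - L i c) * |y k0| := by
      calc ∑ j ∈ Finset.univ.erase k, L (σ j) c * |y j|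
          ≤ ∑ j ∈ Finset.univ.erase k, L (σ j) c * |y k0| := by
            refine Finset.sum_le_sum fun j hj => ?_
            exact mul_le_mul_of_nonneg_left (hk0 j (mem_univ _)) (hnonneg j hj)
        _ = (∑ j ∈ Finset.univ.erase k, L (σ j) c) * |y k0| := by rw [Finset.sum_mul]
        _ ≤ (-L c c - L i c) * |y k0| := by
            exact mul_le_mul_of_nonneg_right hsum_bound (abs_nonneg _)
    -- deduce L i c = 0
    have hic0 : L i c = 0 := by
      have hic := hM i c (fun h => hci h.symm)
      nlinarith
    refine ⟨hic0, ?_⟩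
    -- per-term equality forces |y j| = max on the support
    have hterm : ∀ j ∈ Finset.univ.erase k, L (σ j) c * (|y k0| - |y j|) = 0 := by
      have hsum0 : ∑ j ∈ Finset.univ.erase k, L (σ j) c * (|y k0| - |y j|) = 0 := by
        have hle : ∑ j ∈ Finset.univ.erase k, L (σ j) c * (|y k0| - |y j|) ≤ 0 := by
          have expand : ∑ j ∈ Finset.univ.erase k, L (σ j) c * (|y k0| - |y j|)
              = (∑ j ∈ Finset.univ.erase k, L (σ j) c) * |y k0|
                - ∑ j ∈ Finset.univ.erase k, L (σ j) c * |y j| := by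
            rw [Finset.sum_mul, ← Finset.sum_sub_distrib]
            refine Finset.sum_congr rfl fun j _ => by ring
          rw [expand]
          rw [hic0, sub_zero] at hsum_bound
          linarith [mul_le_mul_of_nonneg_right hsum_bound (abs_nonneg (y k0)), hchain]
        have hge : 0 ≤ ∑ j ∈ Finset.univ.erase k, L (σ j) c * (|y k0| - |y j|) := by
          refine Finset.sum_nonneg fun j hj => ?_
          have := hk0 j (mem_univ j)
          have := hnonneg j hj
          nlinarith
        linarith
      intro j hj
      refine (Finset.sum_eq_zero_iff_of_nonneg (fun j hj => ?_)).mp hsum0 j hj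
      have := hk0 j (mem_univ j)
      have := hnonneg j hj
      nlinarith
    intro j hLj
    by_cases hjk : j = k
    · rw [hjk]; exact hkmax
    · have := hterm j (Finset.mem_erase.mpr ⟨hjk, mem_univ j⟩)
      rcases mul_eq_zero.mp this with h | h
      · exact absurd h hLj
      · have := hk0 j (mem_univ j); linarith [sub_eq_zero.mp h]
  -- propagate along an irreducibility path from σ k0 to i
  have hP : ∀ b : Fin (n+1),
      Relation.TransGen (fun a b : Fin (n+1) => a ≠ b ∧ L b a ≠ 0) (σ k0) b →
      ∃ k : Fin n, |y k| = |y k0| ∧ b = σ k := by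
    intro b hpath
    induction hpath with
    | @single b' h =>
        rcases h with ⟨hne, hL⟩
        by_cases hbi : b' = i
        · rw [hbi] at hL
          exact absurd ((claim k0 rfl).1) hL
        · obtain ⟨j, hj⟩ := Fin.exists_succAbove_eq hbi
          refine ⟨j, ?_, hj.symm⟩
          exact (claim k0 rfl).2 j (by rw [hσ, hj]; exact hL)
    | @tail b' c' hp h ih =>
        rcases h with ⟨hne, hL⟩
        obtain ⟨k, hk, hb'⟩ := ih
        rw [hb'] at hL
        by_cases hbi : c' = i
        · rw [hbi] at hL
          exact absurd ((claim k hk).1) hL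
        · obtain ⟨j, hj⟩ := Fin.exists_succAbove_eq hbi
          refine ⟨j, ?_, hj.symm⟩
          exact (claim k hk).2 j (by rw [hσ, hj]; exact hL)
  have hpath := hirr (σ k0) i (Fin.succAbove_ne i k0)
  obtain ⟨k, -, hk⟩ := hP i hpath
  exact (Fin.succAbove_ne i k) hk.symm


/-- The diagonal entry of the adjugate is the corresponding principal minor. -/
lemma adj_diag {n : ℕ} (A : Matrix (Fin (n+1)) (Fin (n+1)) ℝ) (i : Fin (n+1)) :
    A.adjugate i i = (A.submatrix i.succAbove i.succAbove).det := by
  rw [Matrix.adjugate_apply, Matrix.det_succ_row _ i]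
  rw [Finset.sum_eq_single i]
  · have h1 : (A.updateRow i (Pi.single i 1)) i i = 1 := by
      rw [Matrix.updateRow_self, Pi.single_eq_same]
    have h2 : (A.updateRow i (Pi.single i 1)).submatrix i.succAbove i.succAbove
        = A.submatrix i.succAbove i.succAbove := by
      ext a b
      simp [Matrix.submatrix_apply, Matrix.updateRow_ne (Fin.succAbove_ne i a)]
    rw [h1, h2]
    have h3 : (-1 : ℝ) ^ ((i : ℕ) + (i : ℕ)) = 1 := Even.neg_one_pow ⟨i, rfl⟩
    rw [h3, one_mul, one_mul]
  · intro j _ hji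
    have : (A.updateRow i (Pi.single i 1)) i j = 0 := by
      rw [Matrix.updateRow_self, Pi.single_eq_of_ne hji]
    rw [this, mul_zero, zero_mul]
  · intro h
    exact absurd (Finset.mem_univ i) h

theorem stmt2 {n : ℕ} (L : Matrix (Fin (n + 1)) (Fin (n + 1)) ℝ)
    (hM : Metzler L) (hirr : Irred L) (hcol : ∀ j, ∑ i, L i j = 0)
    -- δ_i = (-1)^{(n+1)-1} · L*_{ii}, the cofactor of the i-th diagonal entry being
    -- the determinant of the matrix obtained by deleting row i and column i of L
    (δ : Fin (n + 1) → ℝ)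
    (hδ : ∀ i, δ i = (-1 : ℝ) ^ n * (L.submatrix i.succAbove i.succAbove).det) :
    (∀ i, 0 < δ i) ∧ L.mulVec δ = 0 ∧
      ∀ w : Fin (n + 1) → ℝ, L.mulVec w = 0 → ∃ c : ℝ, w = c • δ := by
  have herase : ∀ c : Fin (n+1), ∑ a ∈ Finset.univ.erase c, L a c = -L c c := by
    intro c
    have := Finset.sum_erase_add Finset.univ (fun a => L a c) (mem_univ c)
    rw [hcol c] at this
    linarith
  have hdetL : L.det = 0 := by
    have h1 : ((1 : Fin (n+1) → ℝ)) ≠ 0 := by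
      intro h
      have := congrFun h 0
      simp at this
    have h2 : Lᵀ.mulVec 1 = 0 := by
      funext k
      simp [Matrix.mulVec, dotProduct, Matrix.transpose_apply, hcol k]
    have := (Matrix.exists_mulVec_eq_zero_iff).mp ⟨1, h1, h2⟩
    rwa [Matrix.det_transpose] at this
  have hsub : ∀ i : Fin (n+1), (L.submatrix i.succAbove i.succAbove).det ≠ 0 :=
    subdet_ne_zero L hM hirr hcol
  -- positivity
  have hpos : ∀ i, 0 < δ i := by
    intro i
    have hnonneg : 0 ≤ δ i := by
      have hdetB : (-(L.submatrix i.succAbove i.succAbove)).det = δ i := by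
        rw [Matrix.det_neg, hδ i, Fintype.card_fin]
      rw [← hdetB]
      apply det_nonneg_of_weak_dom
      intro k
      have habs : ∀ j ∈ Finset.univ.erase k,
          |(-(L.submatrix i.succAbove i.succAbove)) j k|
            = L (i.succAbove j) (i.succAbove k) := by
        intro j hj
        have hne : i.succAbove j ≠ i.succAbove k := by
          intro h
          exact (Finset.ne_of_mem_erase hj) (Fin.succAbove_right_injective h)
        simp only [Matrix.neg_apply, Matrix.submatrix_apply, abs_neg]
        exact abs_of_nonneg (hM _ _ hne)
      rw [Finset.sum_congr rfl habs]
      have hdd : (-(L.submatrix i.succAbove i.succAbove)) k k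
          = -L (i.succAbove k) (i.succAbove k) := rfl
      rw [hdd]
      -- sum over embedded indices ≤ sum over all off-diagonal of column
      have hinj : Function.Injective (i.succAbove) := Fin.succAbove_right_injective
      have himg : ∑ j ∈ Finset.univ.erase k, L (i.succAbove j) (i.succAbove k)
          = ∑ a ∈ (Finset.univ.erase k).image i.succAbove, L a (i.succAbove k) := by
        rw [Finset.sum_image (fun x _ y _ h => hinj h)]
      rw [himg]
      have hsub' : (Finset.univ.erase k).image i.succAbove
          ⊆ Finset.univ.erase (i.succAbove k) := by
        intro a ha
        obtain ⟨j, hj, rfl⟩ := Finset.mem_image.mp ha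
        refine Finset.mem_erase.mpr ⟨?_, mem_univ _⟩
        intro h
        exact (Finset.mem_erase.mp hj).1 (hinj h)
      have hle := Finset.sum_le_sum_of_subset_of_nonneg hsub'
        (fun a ha _ => hM a (i.succAbove k) (Finset.ne_of_mem_erase ha))
      rw [herase (i.succAbove k)] at hle
      exact hle
    have hne : δ i ≠ 0 := by
      rw [hδ i]
      exact mul_ne_zero (pow_ne_zero _ (by norm_num)) (hsub i)
    exact lt_of_le_of_ne hnonneg (Ne.symm hne)
  -- adjugate rows are constant
  have hadjrow : ∀ p j, L.adjugate p j = L.adjugate p p := by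
    intro p j
    refine leftk_const L hM hirr hcol (fun q => L.adjugate p q) ?_ j p
    intro k
    have h1 := congrFun (congrFun (Matrix.adjugate_mul L) p) k
    rw [Matrix.mul_apply] at h1
    rw [hdetL] at h1
    simpa using h1
  -- δ in terms of adjugate columns
  have hδadj : ∀ j k, δ j = (-1 : ℝ) ^ n * L.adjugate j k := by
    intro j k
    rw [hδ j, ← adj_diag, hadjrow j k]
  have hmul : L.mulVec δ = 0 := by
    funext k
    have h1 : L.mulVec δ k = ∑ j, L k j * ((-1 : ℝ) ^ n * L.adjugate j k) := by
      simp only [Matrix.mulVec, dotProduct]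
      exact Finset.sum_congr rfl fun j _ => by rw [hδadj j k]
    have h2 := congrFun (congrFun (Matrix.mul_adjugate L) k) k
    rw [Matrix.mul_apply] at h2
    rw [hdetL] at h2
    simp only [zero_smul, Matrix.zero_apply] at h2
    have h3 : ∑ j, L k j * ((-1 : ℝ) ^ n * L.adjugate j k)
        = (-1 : ℝ) ^ n * ∑ j, L k j * L.adjugate j k := by
      rw [Finset.mul_sum]
      exact Finset.sum_congr rfl fun j _ => by ring
    rw [h1, h3, h2, mul_zero]
    rfl
  refine ⟨hpos, hmul, ?_⟩
  intro w hw
  set i0 : Fin (n+1) := 0 with hi0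
  refine ⟨w i0 / δ i0, ?_⟩
  set u : Fin (n+1) → ℝ := w - (w i0 / δ i0) • δ with hu
  have hu0 : u i0 = 0 := by
    simp only [hu, Pi.sub_apply, Pi.smul_apply, smul_eq_mul]
    rw [div_mul_cancel₀ _ (ne_of_gt (hpos i0))]
    ring
  have hLu : L.mulVec u = 0 := by
    rw [hu, Matrix.mulVec_sub, hw]
    have : L.mulVec ((w i0 / δ i0) • δ) = (w i0 / δ i0) • L.mulVec δ :=
      Matrix.mulVec_smul _ _ _
    rw [this, hmul, smul_zero, sub_zero]
  -- restrict to the complement of i0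
  have hx : (L.submatrix i0.succAbove i0.succAbove).mulVec (fun j => u (i0.succAbove j)) = 0 := by
    funext j
    have h1 := congrFun hLu (i0.succAbove j)
    simp only [Matrix.mulVec, dotProduct, Pi.zero_apply] at h1 ⊢
    rw [Fin.sum_univ_succAbove (fun a => L (i0.succAbove j) a * u a) i0] at h1
    rw [hu0, mul_zero, zero_add] at h1
    simpa [Matrix.submatrix_apply] using h1
  have hxz : (fun j => u (i0.succAbove j)) = 0 := by
    by_contra hxne
    exact hsub i0 ((Matrix.exists_mulVec_eq_zero_iff).mp ⟨_, hxne, hx⟩)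
  have huz : u = 0 := by
    funext a
    by_cases ha : a = i0
    · rw [ha]; exact hu0
    · obtain ⟨j, hj⟩ := Fin.exists_succAbove_eq ha
      rw [← hj]
      exact congrFun hxz j
  funext a
  have := congrFun huz a
  simp only [hu, Pi.sub_apply, Pi.smul_apply, smul_eq_mul, Pi.zero_apply] at this
  simp only [Pi.smul_apply, smul_eq_mul]
  linarith
end

section
/- Let L be an n×n Metzler irreducible matrix with columns summing to 0, and let p be the positive vector with L p = 0 and ∑_i p_i = 1. Define h(x) = ∑_i (L x)_i · p_i / x_i for x with positive entries. Then h(x) ≥ 0 for every x ∈ ℝ^n with all entries strictly positive. -/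
open Matrix

theorem stmt3 {n : ℕ} (L : Matrix (Fin (n + 1)) (Fin (n + 1)) ℝ)
    (hM : Metzler L) (hirr : Irred L) (hcol : ∀ j, ∑ i, L i j = 0)
    (p : Fin (n + 1) → ℝ) (hp : ∀ i, 0 < p i) (hLp : L.mulVec p = 0)
    (hps : ∑ i, p i = 1)
    (x : Fin (n + 1) → ℝ) (hx : ∀ i, 0 < x i) :
    0 ≤ ∑ i, (L.mulVec x) i * p i / x i := by
  set g : Fin (n + 1) → ℝ := fun i => Real.log (x i) - Real.log (p i) with hg
  have e2 : ∀ i, ∑ j, L i j * p j = 0 := by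
    intro i
    have := congrFun hLp i
    simpa [Matrix.mulVec, dotProduct] using this
  have key : ∀ i j, L i j * p j + L i j * p j * (g j - g i) ≤ L i j * x j * p i / x i := by
    intro i j
    rcases eq_or_ne i j with rfl | hij
    · rw [sub_self, mul_zero, add_zero, mul_right_comm, mul_div_assoc,
        div_self (hx i).ne', mul_one]
    · have hL : 0 ≤ L i j := hM i j hij
      set t : ℝ := p i * x j / (p j * x i) with ht
      have htpos : 0 < t := div_pos (mul_pos (hp i) (hx j)) (mul_pos (hp j) (hx i))
      have hlog : g j - g i = Real.log t := by
        rw [ht, Real.log_div (mul_pos (hp i) (hx j)).ne' (mul_pos (hp j) (hx i)).ne',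
          Real.log_mul (hp i).ne' (hx j).ne', Real.log_mul (hp j).ne' (hx i).ne', hg]
        ring
      have h1 : g j - g i ≤ t - 1 := hlog ▸ Real.log_le_sub_one_of_pos htpos
      have h2 : L i j * p j * (g j - g i) ≤ L i j * p j * (t - 1) :=
        mul_le_mul_of_nonneg_left h1 (mul_nonneg hL (hp j).le)
      have h3 : L i j * p j + L i j * p j * (t - 1) = L i j * x j * p i / x i := by
        have hxj := (hx i).ne'
        have hpj := (hp j).ne'
        rw [ht]; field_simp; ring
      clear_value t
      rw [← h3]
      linarith
  have A : ∑ i, ∑ j, L i j * p j * g i = 0 := by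
    have : ∀ i : Fin (n + 1), ∑ j, L i j * p j * g i = (∑ j, L i j * p j) * g i := by
      intro i; rw [Finset.sum_mul]
    simp_rw [this, e2, zero_mul, Finset.sum_const_zero]
  have B : ∑ i, ∑ j, L i j * (p j + p j * g j) = 0 := by
    rw [Finset.sum_comm]
    have : ∀ j : Fin (n + 1), ∑ i, L i j * (p j + p j * g j)
        = (∑ i, L i j) * (p j + p j * g j) := by
      intro j; rw [Finset.sum_mul]
    simp_rw [this, hcol, zero_mul, Finset.sum_const_zero]
  have hzero : ∑ i, ∑ j, (L i j * p j + L i j * p j * (g j - g i)) = 0 := by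
    have : ∀ i j : Fin (n + 1), L i j * p j + L i j * p j * (g j - g i)
        = L i j * (p j + p j * g j) - L i j * p j * g i := by
      intro i j; ring
    simp_rw [this, Finset.sum_sub_distrib]
    rw [A, B]; ring
  have step : ∑ i, ∑ j, (L i j * p j + L i j * p j * (g j - g i))
      ≤ ∑ i, ∑ j, L i j * x j * p i / x i :=
    Finset.sum_le_sum fun i _ => Finset.sum_le_sum fun j _ => key i j
  have hrw : ∑ i, (L.mulVec x) i * p i / x i = ∑ i, ∑ j, L i j * x j * p i / x i := by
    refine Finset.sum_congr rfl fun i _ => ?_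
    rw [Matrix.mulVec, dotProduct, Finset.sum_mul, Finset.sum_div]
  rw [hrw, ← hzero]
  exact step
end

section
/- Let R be the transpose of a Metzler irreducible matrix L with columns summing to 0, and let p > 0 satisfy L p = 0. Then for every vector x with positive entries, 0 ≤ ⟨p, (R x)/x⟩, where ((R x)/x)_i = (R x)_i / x_i. -/
open Matrix

theorem stmt4 {n : ℕ} (L : Matrix (Fin (n + 1)) (Fin (n + 1)) ℝ)
    (hM : Metzler L) (hirr : Irred L) (hcol : ∀ j, ∑ i, L i j = 0)
    (p : Fin (n + 1) → ℝ) (hp : ∀ i, 0 < p i) (hLp : L.mulVec p = 0)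
    (x : Fin (n + 1) → ℝ) (hx : ∀ i, 0 < x i) :
    0 ≤ ∑ i, p i * ((Lᵀ.mulVec x) i / x i) := by
  have hrw : ∀ i, p i * ((Lᵀ.mulVec x) i / x i) = ∑ j, p i * L j i * (x j / x i) := by
    intro i
    simp only [Matrix.mulVec, dotProduct, Matrix.transpose_apply]
    rw [Finset.sum_div, Finset.mul_sum]
    exact Finset.sum_congr rfl fun j _ => by ring
  have hLp' : ∀ j, ∑ i, L j i * p i = 0 := by
    intro j
    have := congrFun hLp j
    simpa [Matrix.mulVec, dotProduct] using this
  -- The logarithmic lower bound sums to zero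
  have hT : (∑ i, ∑ j, p i * L j i * (1 + Real.log (x j) - Real.log (x i))) = 0 := by
    have expand : ∀ i j : Fin (n + 1),
        p i * L j i * (1 + Real.log (x j) - Real.log (x i))
          = p i * (1 - Real.log (x i)) * L j i + Real.log (x j) * (L j i * p i) := by
      intro i j; ring
    simp_rw [expand, Finset.sum_add_distrib]
    have hA : (∑ i, ∑ j, p i * (1 - Real.log (x i)) * L j i) = 0 := by
      refine Finset.sum_eq_zero fun i _ => ?_
      rw [← Finset.mul_sum, hcol i, mul_zero]
    have hB : (∑ i, ∑ j, Real.log (x j) * (L j i * p i)) = 0 := by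
      rw [Finset.sum_comm]
      refine Finset.sum_eq_zero fun j _ => ?_
      rw [← Finset.mul_sum, hLp' j, mul_zero]
    rw [hA, hB, add_zero]
  -- pointwise inequality
  have key : ∀ i j : Fin (n + 1),
      p i * L j i * (1 + Real.log (x j) - Real.log (x i)) ≤ p i * L j i * (x j / x i) := by
    intro i j
    by_cases h : i = j
    · subst h
      rw [div_self (hx i).ne']
      simp
    · have hcoef : 0 ≤ p i * L j i := mul_nonneg (hp i).le (hM j i (Ne.symm h))
      have hlog : Real.log (x j / x i) ≤ x j / x i - 1 :=
        Real.log_le_sub_one_of_pos (div_pos (hx j) (hx i))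
      rw [Real.log_div (hx j).ne' (hx i).ne'] at hlog
      exact mul_le_mul_of_nonneg_left (by linarith) hcoef
  calc (0 : ℝ) = ∑ i, ∑ j, p i * L j i * (1 + Real.log (x j) - Real.log (x i)) := hT.symm
    _ ≤ ∑ i, ∑ j, p i * L j i * (x j / x i) :=
        Finset.sum_le_sum fun i _ => Finset.sum_le_sum fun j _ => key i j
    _ = ∑ i, p i * ((Lᵀ.mulVec x) i / x i) := by
        exact Finset.sum_congr rfl fun i _ => (hrw i).symm
end

section
/- Let R̄ = diag(r̄_1,…,r̄_n) be a constant diagonal matrix and L̄ a Metzler irreducible matrix with columns summing to 0 and normalized kernel vector q > 0 (L̄ q = 0, ∑ q_i = 1). Then λ_max(R̄ + m L̄) → ∑_i q_i r̄_i as m → ∞. -/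
open Matrix

noncomputable def specAbscissa {n : ℕ} (A : Matrix (Fin n) (Fin n) ℝ) : ℝ :=
  sSup {t : ℝ | ∃ μ : ℂ, (A.map (fun a => (a : ℂ))).charpoly.IsRoot μ ∧ t = μ.re}

open Polynomial Filter


lemma eval_charpoly' {R : Type*} [CommRing R] {N : ℕ} (M : Matrix (Fin N) (Fin N) R) (t : R) :
    M.charpoly.eval t = (t • (1 : Matrix (Fin N) (Fin N) R) - M).det := by
  rw [Matrix.charpoly, ← Polynomial.coe_evalRingHom, RingHom.map_det]
  congr 1
  ext i j
  by_cases h : i = j <;>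
    simp [charmatrix_apply, Matrix.one_apply, h, Matrix.diagonal_apply]

lemma exists_eigvec {N : ℕ} (M : Matrix (Fin (N+1)) (Fin (N+1)) ℂ) {μ : ℂ}
    (h : M.charpoly.IsRoot μ) : ∃ v, v ≠ 0 ∧ M *ᵥ v = μ • v := by
  have hdet : (μ • (1 : Matrix (Fin (N+1)) (Fin (N+1)) ℂ) - M).det = 0 := by
    rw [← eval_charpoly']; exact h
  obtain ⟨v, hv0, hv⟩ := (Matrix.exists_mulVec_eq_zero_iff).2 hdet
  refine ⟨v, hv0, ?_⟩
  rw [Matrix.sub_mulVec, Matrix.smul_mulVec, Matrix.one_mulVec, sub_eq_zero] at hv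
  exact hv.symm

section
variable {N : ℕ} (A : Matrix (Fin (N+1)) (Fin (N+1)) ℝ)

lemma charpoly_cne : (A.map (fun a => (a : ℂ))).charpoly ≠ 0 :=
  (Matrix.charpoly_monic _).ne_zero

lemma specSet_eq :
    {t : ℝ | ∃ μ : ℂ, (A.map (fun a => (a : ℂ))).charpoly.IsRoot μ ∧ t = μ.re}
      = Complex.re '' {μ | (A.map (fun a => (a : ℂ))).charpoly.IsRoot μ} := by
  ext t; constructor
  · rintro ⟨μ, h1, rfl⟩; exact ⟨μ, h1, rfl⟩
  · rintro ⟨μ, h1, rfl⟩; exact ⟨μ, h1, rfl⟩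

lemma specSet_finite :
    {t : ℝ | ∃ μ : ℂ, (A.map (fun a => (a : ℂ))).charpoly.IsRoot μ ∧ t = μ.re}.Finite := by
  rw [specSet_eq]
  exact (Polynomial.finite_setOf_isRoot (charpoly_cne A)).image _

lemma specSet_nonempty :
    {t : ℝ | ∃ μ : ℂ, (A.map (fun a => (a : ℂ))).charpoly.IsRoot μ ∧ t = μ.re}.Nonempty := by
  have hd : 0 < ((A.map (fun a => (a : ℂ))).charpoly).degree := by
    rw [Matrix.charpoly_degree_eq_dim]
    simp only [Fintype.card_fin]
    exact_mod_cast Nat.succ_pos N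
  obtain ⟨z, hz⟩ := Complex.exists_root hd
  exact ⟨z.re, z, hz, rfl⟩

lemma le_specAbscissa {μ : ℂ} (h : (A.map (fun a => (a : ℂ))).charpoly.IsRoot μ) :
    μ.re ≤ specAbscissa A :=
  le_csSup (specSet_finite A).bddAbove ⟨μ, h, rfl⟩

lemma specAbscissa_le {b : ℝ}
    (h : ∀ μ : ℂ, (A.map (fun a => (a : ℂ))).charpoly.IsRoot μ → μ.re ≤ b) :
    specAbscissa A ≤ b := by
  apply csSup_le (specSet_nonempty A)
  rintro t ⟨μ, h1, rfl⟩
  exact h μ h1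
end

lemma UB {N : ℕ} {A : Matrix (Fin (N+1)) (Fin (N+1)) ℝ} (hA : Metzler A)
    {w : Fin (N+1) → ℝ} (hw : ∀ i, 0 < w i) {lam : ℝ}
    (h : ∀ j, ∑ i, w i * A i j ≤ lam * w j) :
    ∀ μ : ℂ, (A.map (fun a => (a : ℂ))).charpoly.IsRoot μ → μ.re ≤ lam := by
  intro μ hroot
  obtain ⟨v, hv0, hv⟩ := exists_eigvec _ hroot
  set x : Fin (N+1) → ℝ := fun i => ‖v i‖ with hx
  have hx0 : ∀ i, 0 ≤ x i := fun i => norm_nonneg _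
  have key : ∀ i, μ.re * x i ≤ ∑ j, A i j * x j := by
    intro i
    have h1 : (μ - (A i i : ℂ)) * v i = ∑ j ∈ Finset.univ.erase i, (A i j : ℂ) * v j := by
      have h2 : ∑ j, (A i j : ℂ) * v j = μ * v i := by
        have := congrFun hv i
        simpa [Matrix.mulVec, dotProduct, Matrix.map_apply] using this
      have h3 : (A i i : ℂ) * v i + ∑ j ∈ Finset.univ.erase i, (A i j : ℂ) * v j
          = ∑ j, (A i j : ℂ) * v j :=
        Finset.add_sum_erase _ (fun j => (A i j : ℂ) * v j) (Finset.mem_univ i)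
      rw [← h3] at h2
      linear_combination -h2
    have h4 : ‖μ - (A i i : ℂ)‖ * x i
        ≤ ∑ j ∈ Finset.univ.erase i, A i j * x j := by
      rw [hx]
      calc ‖μ - (A i i : ℂ)‖ * ‖v i‖
          = ‖(μ - (A i i : ℂ)) * v i‖ := (norm_mul _ _).symm
        _ = ‖∑ j ∈ Finset.univ.erase i, (A i j : ℂ) * v j‖ := by rw [h1]
        _ ≤ ∑ j ∈ Finset.univ.erase i, ‖(A i j : ℂ) * v j‖ := by
            exact norm_sum_le _ _
        _ = ∑ j ∈ Finset.univ.erase i, A i j * ‖v j‖ := by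
            apply Finset.sum_congr rfl
            intro j hj
            rw [norm_mul, Complex.norm_real, Real.norm_eq_abs,
              abs_of_nonneg (hA i j (Finset.ne_of_mem_erase hj).symm)]
    have h5 : (μ.re - A i i) * x i ≤ ‖μ - (A i i : ℂ)‖ * x i := by
      apply mul_le_mul_of_nonneg_right _ (hx0 i)
      calc μ.re - A i i = (μ - (A i i : ℂ)).re := by simp
        _ ≤ ‖μ - (A i i : ℂ)‖ := Complex.re_le_norm _
    have h6 : A i i * x i + ∑ j ∈ Finset.univ.erase i, A i j * x j = ∑ j, A i j * x j :=
      Finset.add_sum_erase _ (fun j => A i j * x j) (Finset.mem_univ i)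
    nlinarith [h4, h5]
  have hsum : ∑ i, w i * (μ.re * x i) ≤ ∑ j, lam * (w j * x j) := by
    calc ∑ i, w i * (μ.re * x i) ≤ ∑ i, w i * ∑ j, A i j * x j := by
          apply Finset.sum_le_sum
          intro i _
          exact mul_le_mul_of_nonneg_left (key i) (hw i).le
      _ = ∑ j, (∑ i, w i * A i j) * x j := by
          simp_rw [Finset.mul_sum]
          rw [Finset.sum_comm]
          simp_rw [Finset.sum_mul]
          apply Finset.sum_congr rfl
          intro j _
          apply Finset.sum_congr rfl
          intro i _
          ring
      _ ≤ ∑ j, lam * (w j * x j) := by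
          apply Finset.sum_le_sum
          intro j _
          rw [← mul_assoc]
          exact mul_le_mul_of_nonneg_right (h j) (hx0 j)
  have hpos : 0 < ∑ i, w i * x i := by
    obtain ⟨i, hi⟩ := Function.ne_iff.mp hv0
    apply Finset.sum_pos' (fun i _ => mul_nonneg (hw i).le (hx0 i))
    exact ⟨i, Finset.mem_univ i, mul_pos (hw i) (by simpa [hx] using hi)⟩
  have : μ.re * ∑ i, w i * x i ≤ lam * ∑ i, w i * x i := by
    calc μ.re * ∑ i, w i * x i = ∑ i, w i * (μ.re * x i) := by
          rw [Finset.mul_sum]; apply Finset.sum_congr rfl; intros; ring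
      _ ≤ ∑ j, lam * (w j * x j) := hsum
      _ = lam * ∑ i, w i * x i := by rw [Finset.mul_sum]
  exact le_of_mul_le_mul_right this hpos

section
variable {N : ℕ} {L : Matrix (Fin (N+1)) (Fin (N+1)) ℝ}

lemma zc (hM : Metzler L) (hirr : Irred L) {y : Fin (N+1) → ℝ}
    (hy : ∀ i, 0 ≤ y i) (hLy : L *ᵥ y = 0) {i0 : Fin (N+1)} (h0 : y i0 = 0) :
    y = 0 := by
  have key : ∀ i, y i = 0 → ∀ j, L i j ≠ 0 → y j = 0 := by
    intro i hi j hLij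
    have hrow : ∑ j, L i j * y j = 0 := by
      have := congrFun hLy i
      simpa [Matrix.mulVec, dotProduct] using this
    have hnn : ∀ k ∈ Finset.univ, 0 ≤ L i k * y k := by
      intro k _
      rcases eq_or_ne k i with rfl | hk
      · rw [hi]; simp
      · exact mul_nonneg (hM i k (Ne.symm hk)) (hy k)
    have := (Finset.sum_eq_zero_iff_of_nonneg hnn).1 hrow j (Finset.mem_univ j)
    rcases mul_eq_zero.1 this with h | h
    · exact absurd h hLij
    · exact h
  have aux : ∀ a b : Fin (N+1),
      Relation.TransGen (fun a b : Fin (N+1) => a ≠ b ∧ L b a ≠ 0) a b → y b = 0 → y a = 0 := by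
    intro a b h
    induction h with
    | single hr => intro hb; exact key _ hb _ hr.2
    | tail _ hr ih => intro hb; exact ih (key _ hb _ hr.2)
  funext j
  show y j = 0
  rcases eq_or_ne j i0 with rfl | hj
  · exact h0
  · exact aux j i0 (hirr j i0 hj) h0

lemma ker_eq_span (hM : Metzler L) (hirr : Irred L)
    {q : Fin (N+1) → ℝ} (hq : ∀ i, 0 < q i) (hLq : L *ᵥ q = 0)
    {x : Fin (N+1) → ℝ} (hx : L *ᵥ x = 0) : ∃ c : ℝ, x = c • q := by
  obtain ⟨i0, _, hmin⟩ := Finset.exists_min_image Finset.univ (fun i => x i / q i)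
    ⟨0, Finset.mem_univ 0⟩
  set t := x i0 / q i0 with ht
  have hy : ∀ i, 0 ≤ x i - t * q i := by
    intro i
    have h1 : t ≤ x i / q i := hmin i (Finset.mem_univ i)
    have h2 : t * q i ≤ x i := (le_div_iff₀ (hq i)).1 h1
    linarith
  have hLy : L *ᵥ (x - t • q) = 0 := by
    rw [Matrix.mulVec_sub, Matrix.mulVec_smul, hx, hLq]
    simp
  have h0 : (x - t • q) i0 = 0 := by
    simp only [Pi.sub_apply, Pi.smul_apply, smul_eq_mul, ht]
    rw [div_mul_cancel₀ _ (ne_of_gt (hq i0)), sub_self]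
  have := zc hM hirr (y := x - t • q) (fun i => by simpa using hy i) hLy h0
  refine ⟨t, ?_⟩
  funext i
  have := congrFun this i
  simp only [Pi.sub_apply, Pi.smul_apply, smul_eq_mul, Pi.zero_apply] at this
  simp only [Pi.smul_apply, smul_eq_mul]
  linarith

lemma kerT_const (hM : Metzler L) (hirr : Irred L) (hcol : ∀ j, ∑ i, L i j = 0)
    {x : Fin (N+1) → ℝ} (hx : Lᵀ *ᵥ x = 0) : ∀ i, x i = x 0 := by
  obtain ⟨i0, _, hmax⟩ := Finset.exists_max_image Finset.univ x ⟨0, Finset.mem_univ 0⟩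
  have key : ∀ i, x i = x i0 → ∀ j, L j i ≠ 0 → x j = x i0 := by
    intro i hi j hLji
    have hrow : ∑ k, L k i * x k = 0 := by
      have := congrFun hx i
      simpa [Matrix.mulVec, dotProduct, Matrix.transpose_apply] using this
    have hrow2 : ∑ k, L k i * (x i0 - x k) = 0 := by
      have hc : ∑ k, L k i * x i0 = 0 := by
        rw [← Finset.sum_mul, hcol i, zero_mul]
      calc ∑ k, L k i * (x i0 - x k) = ∑ k, (L k i * x i0 - L k i * x k) := by
            apply Finset.sum_congr rfl; intros; ring
        _ = (∑ k, L k i * x i0) - ∑ k, L k i * x k := Finset.sum_sub_distrib _ _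
        _ = 0 := by rw [hc, hrow]; ring
    have hnn : ∀ k ∈ Finset.univ, 0 ≤ L k i * (x i0 - x k) := by
      intro k _
      rcases eq_or_ne k i with rfl | hk
      · rw [hi]; simp
      · exact mul_nonneg (hM k i hk) (by linarith [hmax k (Finset.mem_univ k)])
    have := (Finset.sum_eq_zero_iff_of_nonneg hnn).1 hrow2 j (Finset.mem_univ j)
    rcases mul_eq_zero.1 this with h | h
    · exact absurd h hLji
    · linarith
  have aux : ∀ b : Fin (N+1),
      Relation.TransGen (fun a b : Fin (N+1) => a ≠ b ∧ L b a ≠ 0) i0 b → x b = x i0 := by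
    intro b h
    induction h with
    | single hr => exact key i0 rfl _ hr.2
    | tail _ hr ih => exact key _ ih _ hr.2
  have hall : ∀ i, x i = x i0 := by
    intro i
    rcases eq_or_ne i0 i with rfl | hi
    · rfl
    · exact aux i (hirr i0 i hi)
  intro i
  rw [hall i, hall 0]

lemma exists_pos_kernel (hM : Metzler L) (hirr : Irred L) (hcol : ∀ j, ∑ i, L i j = 0) :
    ∃ p : Fin (N+1) → ℝ, (∀ i, 0 < p i) ∧ L *ᵥ p = 0 := by
  have hdetT : (Lᵀ).det = 0 := by
    rw [← Matrix.exists_mulVec_eq_zero_iff]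
    refine ⟨fun _ => 1, ?_, ?_⟩
    · intro h; simpa using congrFun h 0
    · funext j
      simpa [Matrix.mulVec, dotProduct, Matrix.transpose_apply] using hcol j
  have hdet : L.det = 0 := by rw [← Matrix.det_transpose]; exact hdetT
  obtain ⟨x, hx0, hx⟩ := Matrix.exists_mulVec_eq_zero_iff.2 hdet
  set y : Fin (N+1) → ℝ := fun i => |x i| with hy
  have hdiag : ∀ i, L i i ≤ 0 := by
    intro i
    have h1 : L i i = -∑ j ∈ Finset.univ.erase i, L j i := by
      have := hcol i
      rw [← Finset.add_sum_erase _ (fun j => L j i) (Finset.mem_univ i)] at this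
      linarith
    rw [h1, neg_nonpos]
    exact Finset.sum_nonneg fun j hj => hM j i (Finset.ne_of_mem_erase hj)
  have hnn : ∀ i, 0 ≤ (L *ᵥ y) i := by
    intro i
    have hexp : (L *ᵥ y) i = L i i * |x i| + ∑ j ∈ Finset.univ.erase i, L i j * |x j| := by
      simp only [Matrix.mulVec, dotProduct, hy]
      rw [← Finset.add_sum_erase _ (fun j => L i j * |x j|) (Finset.mem_univ i)]
    have hx_i : ∑ j ∈ Finset.univ.erase i, L i j * x j = - (L i i * x i) := by
      have := congrFun hx i
      simp only [Matrix.mulVec, dotProduct, Pi.zero_apply] at this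
      rw [← Finset.add_sum_erase _ (fun j => L i j * x j) (Finset.mem_univ i)] at this
      linarith
    have habs : |L i i * x i| ≤ ∑ j ∈ Finset.univ.erase i, L i j * |x j| := by
      rw [← neg_neg (L i i * x i), abs_neg, ← hx_i]
      calc |∑ j ∈ Finset.univ.erase i, L i j * x j|
          ≤ ∑ j ∈ Finset.univ.erase i, |L i j * x j| := Finset.abs_sum_le_sum_abs _ _
        _ = ∑ j ∈ Finset.univ.erase i, L i j * |x j| := by
            apply Finset.sum_congr rfl
            intro j hj
            rw [abs_mul, abs_of_nonneg (hM i j (Finset.ne_of_mem_erase hj).symm)]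
    have : -(L i i * |x i|) ≤ |L i i * x i| := by
      rw [abs_mul, abs_of_nonpos (hdiag i)]
      nlinarith [abs_nonneg (x i)]
    rw [hexp]
    linarith
  have hsum : ∑ i, (L *ᵥ y) i = 0 := by
    simp only [Matrix.mulVec, dotProduct]
    rw [Finset.sum_comm]
    rw [show (0:ℝ) = ∑ j : Fin (N+1), 0 * y j by simp]
    apply Finset.sum_congr rfl
    intro j _
    rw [← Finset.sum_mul, hcol j]
  have hLy : L *ᵥ y = 0 := by
    funext i
    have := (Finset.sum_eq_zero_iff_of_nonneg (fun i _ => hnn i)).1 hsum i (Finset.mem_univ i)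
    simpa using this
  have hypos : ∀ i, 0 < y i := by
    intro i
    rcases lt_or_eq_of_le (abs_nonneg (x i)) with h | h
    · exact h
    · exfalso
      have := zc hM hirr (y := y) (fun i => abs_nonneg _) hLy (i0 := i) h.symm
      apply hx0
      funext k
      have := congrFun this k
      simp only [hy, Pi.zero_apply] at this
      simpa [abs_eq_zero] using this
  exact ⟨y, hypos, hLy⟩
end

section
variable {N : ℕ} {L : Matrix (Fin (N+1)) (Fin (N+1)) ℝ}

lemma minor_ne_zero (hM : Metzler L) (hirr : Irred L) (hcol : ∀ j, ∑ i, L i j = 0) :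
    (L.submatrix Fin.succ Fin.succ).det ≠ 0 := by
  obtain ⟨p, hp, hLp⟩ := exists_pos_kernel hM hirr hcol
  intro hdet
  obtain ⟨x, hx0, hx⟩ := Matrix.exists_mulVec_eq_zero_iff.2 hdet
  set xh : Fin (N+1) → ℝ := Fin.cons 0 x with hxh
  have hrows : ∀ i : Fin N, (L *ᵥ xh) (Fin.succ i) = 0 := by
    intro i
    have := congrFun hx i
    simp only [Matrix.mulVec, dotProduct, Pi.zero_apply,
      Matrix.submatrix_apply] at this ⊢
    rw [Fin.sum_univ_succ]
    simpa [hxh] using this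
  have hsumall : ∑ i, (L *ᵥ xh) i = 0 := by
    simp only [Matrix.mulVec, dotProduct]
    rw [Finset.sum_comm]
    rw [show (0:ℝ) = ∑ j : Fin (N+1), 0 * xh j by simp]
    apply Finset.sum_congr rfl
    intro j _
    rw [← Finset.sum_mul, hcol j]
  have hrow0 : (L *ᵥ xh) 0 = 0 := by
    rw [Fin.sum_univ_succ] at hsumall
    rw [Finset.sum_congr rfl (fun i _ => hrows i)] at hsumall
    simpa using hsumall
  have hker : L *ᵥ xh = 0 := by
    funext i
    refine Fin.cases ?_ ?_ i
    · exact hrow0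
    · intro j; exact hrows j
  obtain ⟨c, hc⟩ := ker_eq_span hM hirr hp hLp hker
  have hc0 : c = 0 := by
    have := congrFun hc 0
    simp only [hxh, Fin.cons_zero, Pi.smul_apply, smul_eq_mul] at this
    rcases mul_eq_zero.1 this.symm with h | h
    · exact h
    · exact absurd h (ne_of_gt (hp 0))
  apply hx0
  funext i
  have := congrFun hc (Fin.succ i)
  simp [hxh, hc0] at this
  simpa using this

lemma minor_det_pos (hM : Metzler L) (hirr : Irred L) (hcol : ∀ j, ∑ i, L i j = 0) :
    0 < ((-L).submatrix Fin.succ Fin.succ).det := by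
  set Nn : ℝ := ((N + 1 : ℕ) : ℝ) with hNn
  have hNpos : (0:ℝ) < Nn := by positivity
  set L0 : Matrix (Fin (N+1)) (Fin (N+1)) ℝ :=
    Matrix.of (fun i j => Nn⁻¹ - if i = j then 1 else 0) with hL0
  set Lt : ℝ → Matrix (Fin (N+1)) (Fin (N+1)) ℝ := fun t => (1-t) • L0 + t • L with hLt
  have hL0col : ∀ j, ∑ i, L0 i j = 0 := by
    intro j
    simp only [hL0, Matrix.of_apply]
    rw [Finset.sum_sub_distrib]
    simp [Finset.sum_ite_eq', hNn]
    rw [mul_inv_cancel₀ (show ((N:ℝ)+1) ≠ 0 by positivity)]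
    norm_num
  have hhyp : ∀ t ∈ Set.Icc (0:ℝ) 1, Metzler (Lt t) ∧ Irred (Lt t) ∧
      (∀ j, ∑ i, (Lt t) i j = 0) := by
    intro t ht
    obtain ⟨ht0, ht1⟩ := ht
    refine ⟨?_, ?_, ?_⟩
    · intro i j hij
      simp only [hLt, Matrix.add_apply, Matrix.smul_apply, smul_eq_mul, hL0, Matrix.of_apply,
        if_neg hij]
      have := hM i j hij
      have h1 : (0:ℝ) ≤ Nn⁻¹ := by positivity
      nlinarith
    · rcases eq_or_lt_of_le ht1 with rfl | htlt
      · have : Lt 1 = L := by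
          funext i j
          simp [hLt]
        rw [this]; exact hirr
      · intro i j hij
        apply Relation.TransGen.single
        refine ⟨hij, ?_⟩
        have hpos : 0 < (Lt t) j i := by
          simp only [hLt, Matrix.add_apply, Matrix.smul_apply, smul_eq_mul, hL0, Matrix.of_apply,
            if_neg (Ne.symm hij)]
          have h2 : 0 ≤ t * L j i := mul_nonneg ht0 (hM j i (Ne.symm hij))
          have h3 : 0 < (1 - t) * Nn⁻¹ := by
            apply mul_pos (by linarith) (by positivity)
          nlinarith
        exact ne_of_gt hpos
    · intro j
      simp only [hLt, Matrix.add_apply, Matrix.smul_apply, smul_eq_mul]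
      rw [Finset.sum_add_distrib, ← Finset.mul_sum, ← Finset.mul_sum, hL0col j, hcol j]
      ring
  set g : ℝ → ℝ := fun t => ((-(Lt t)).submatrix Fin.succ Fin.succ).det with hg
  have hgcont : Continuous g := by
    apply Continuous.matrix_det
    apply continuous_matrix
    intro i j
    simp only [hLt, Matrix.submatrix_apply, Matrix.neg_apply, Matrix.add_apply,
      Matrix.smul_apply, smul_eq_mul]
    fun_prop
  have hgne : ∀ t ∈ Set.Icc (0:ℝ) 1, g t ≠ 0 := by
    intro t ht
    obtain ⟨h1, h2, h3⟩ := hhyp t ht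
    have := minor_ne_zero h1 h2 h3
    simp only [hg]
    have heq : ((-(Lt t)).submatrix Fin.succ Fin.succ) = -((Lt t).submatrix Fin.succ Fin.succ) := by
      funext i j; simp
    rw [heq, Matrix.det_neg]
    simp only [Fintype.card_fin]
    intro hcon
    apply this
    rcases mul_eq_zero.1 hcon with h | h
    · exact absurd h (by positivity)
    · exact h
  have hg0 : g 0 = Nn⁻¹ := by
    have heq : ((-(Lt 0)).submatrix Fin.succ Fin.succ)
        = 1 + Matrix.replicateCol (Fin 1) (fun _ => -Nn⁻¹) * Matrix.replicateRow (Fin 1) (fun _ => (1:ℝ)) := by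
      funext i j
      simp only [hLt, hL0, Matrix.submatrix_apply, Matrix.neg_apply, Matrix.add_apply,
        Matrix.smul_apply, smul_eq_mul, Matrix.of_apply, one_smul, zero_smul,
        Matrix.add_apply, Matrix.one_apply, Matrix.mul_apply, Matrix.replicateCol_apply, Matrix.replicateRow_apply]
      simp only [Finset.univ_unique, Finset.sum_const, Finset.card_singleton, one_smul]
      by_cases h : i = j
      · simp [h, Fin.succ_injective, (Fin.succ_injective N).eq_iff]
        ring
      · have : Fin.succ i ≠ Fin.succ j := fun hc => h ((Fin.succ_injective N) hc)
        simp [h, this]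
    show ((-(Lt 0)).submatrix Fin.succ Fin.succ).det = Nn⁻¹
    erw [heq, Matrix.det_one_add_replicateCol_mul_replicateRow]
    simp only [dotProduct, Finset.sum_const, Finset.card_univ, Fintype.card_fin,
      nsmul_eq_mul, smul_eq_mul, one_mul, mul_neg, mul_one]
    rw [hNn]
    push_cast
    have hne0 : ((N:ℝ)+1) ≠ 0 := by positivity
    field_simp
    ring
  have hg0pos : 0 < g 0 := by rw [hg0]; positivity
  have hg1 : 0 < g 1 := by
    by_contra hcon
    push_neg at hcon
    have hne := hgne 1 ⟨zero_le_one, le_refl 1⟩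
    have hlt : g 1 < 0 := lt_of_le_of_ne hcon hne
    have : (0:ℝ) ∈ Set.Icc (g 1) (g 0) := ⟨hlt.le, hg0pos.le⟩
    obtain ⟨t, ht, hgt⟩ := intermediate_value_Icc' (zero_le_one) hgcont.continuousOn this
    exact hgne t ht hgt
  have hLt1 : Lt 1 = L := by funext i j; simp [hLt]
  have hfin : g 1 = ((-L).submatrix Fin.succ Fin.succ).det := by
    simp only [hg, hLt1]
  rwa [hfin] at hg1
end

section
variable {N : ℕ} {L : Matrix (Fin (N+1)) (Fin (N+1)) ℝ}

lemma adj_zero_zero (L : Matrix (Fin (N+1)) (Fin (N+1)) ℝ) :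
    adjugate L 0 0 = (L.submatrix Fin.succ Fin.succ).det := by
  rw [Matrix.adjugate_apply, Matrix.det_succ_row_zero]
  rw [Finset.sum_eq_single 0]
  · simp only [Fin.val_zero, pow_zero, one_mul, Matrix.updateRow_self, Pi.single_eq_same,
      Fin.succAbove_zero]
    first
    | rfl
    | (congr 1
       funext i j
       simp [Matrix.updateRow_ne (Fin.succ_ne_zero i)])
  · intro b _ hb
    simp [Matrix.updateRow_self, Pi.single_eq_of_ne hb]
  · intro h
    exact absurd (Finset.mem_univ _) h

lemma adj_struct (hM : Metzler L) (hirr : Irred L) (hcol : ∀ j, ∑ i, L i j = 0)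
    {q : Fin (N+1) → ℝ} (hq : ∀ i, 0 < q i) (hLq : L *ᵥ q = 0) :
    ∃ β : ℝ, (∀ i j, adjugate L i j = β * q i) ∧ 0 < (-1:ℝ)^N * β := by
  have hdet : L.det = 0 := by
    rw [← Matrix.exists_mulVec_eq_zero_iff]
    exact ⟨q, fun h => (ne_of_gt (hq 0)) (congrFun h 0), hLq⟩
  -- columns of adjugate are multiples of q
  have hcols : ∀ j, ∃ c : ℝ, (fun i => adjugate L i j) = c • q := by
    intro j
    apply ker_eq_span hM hirr hq hLq
    funext i
    have := congrFun (congrFun (Matrix.mul_adjugate L) i) j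
    rw [hdet] at this
    simp only [Matrix.mul_apply, zero_smul, Matrix.zero_apply] at this
    simpa [Matrix.mulVec, dotProduct] using this
  -- rows of adjugate are constant
  have hrows : ∀ i j, adjugate L i j = adjugate L i 0 := by
    intro i j
    have hker : Lᵀ *ᵥ (fun j => adjugate L i j) = 0 := by
      funext k
      have := congrFun (congrFun (Matrix.adjugate_mul L) i) k
      rw [hdet] at this
      simp only [Matrix.mul_apply, zero_smul, Matrix.zero_apply] at this
      simp only [Matrix.mulVec, dotProduct, Matrix.transpose_apply, Pi.zero_apply]
      rw [← this]
      apply Finset.sum_congr rfl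
      intro l _
      ring
    exact kerT_const hM hirr hcol hker j
  obtain ⟨c0, hc0⟩ := hcols 0
  refine ⟨c0, ?_, ?_⟩
  · intro i j
    rw [hrows i j]
    have := congrFun hc0 i
    simpa [mul_comm] using this
  · have h1 : adjugate L 0 0 = c0 * q 0 := by
      rw [hrows 0 0]
      have := congrFun hc0 0
      simpa [mul_comm] using this
    have h2 : 0 < ((-L).submatrix Fin.succ Fin.succ).det := minor_det_pos hM hirr hcol
    have h3 : ((-L).submatrix Fin.succ Fin.succ).det
        = (-1:ℝ)^N * (L.submatrix Fin.succ Fin.succ).det := by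
      have heq : ((-L).submatrix Fin.succ Fin.succ) = -(L.submatrix Fin.succ Fin.succ) := by
        funext i j; simp
      rw [heq, Matrix.det_neg, Fintype.card_fin]
    rw [h3, ← adj_zero_zero, h1] at h2
    have hq0 : 0 < q 0 := hq 0
    nlinarith [h2]
end

section
variable {R : Type*} [CommRing R]

lemma det_updateRow_sum_gen {n' : Type*} [Fintype n'] [DecidableEq n'] {ι : Type*} [DecidableEq ι]
    (M : Matrix n' n' R) (k : n') (s : Finset ι) (f : ι → n' → R) :
    (M.updateRow k (∑ j ∈ s, f j)).det = ∑ j ∈ s, (M.updateRow k (f j)).det := by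
  induction s using Finset.induction_on with
  | empty =>
    simp only [Finset.sum_empty]
    apply Matrix.det_eq_zero_of_row_eq_zero k
    intro j
    simp
  | insert _ _ ha ih =>
    rw [Finset.sum_insert ha, Finset.sum_insert ha, Matrix.det_updateRow_add, ih]

lemma row_replace {N : ℕ} (M : Matrix (Fin (N+1)) (Fin (N+1)) R) :
    (M.updateRow 0 (∑ i, M i)).det = M.det := by
  have claim : ∀ s : Finset (Fin (N+1)), 0 ∉ s →
      (M.updateRow 0 (M 0 + ∑ i ∈ s, M i)).det = M.det := by
    intro s
    induction s using Finset.induction_on with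
    | empty => intro _; erw [Finset.sum_empty, add_zero, Matrix.updateRow_eq_self]
    | insert a s ha ih =>
      intro hnot
      have ha0 : a ≠ 0 := fun h => hnot (h ▸ Finset.mem_insert_self a s)
      have hs0 : 0 ∉ s := fun h => hnot (Finset.mem_insert_of_mem h)
      erw [Finset.sum_insert ha, show M 0 + (M a + ∑ i ∈ s, M i)
        = (M 0 + ∑ i ∈ s, M i) + M a by abel, Matrix.det_updateRow_add, ih hs0]
      have hzero : (M.updateRow 0 (M a)).det = 0 := by
        apply Matrix.det_zero_of_row_eq (Ne.symm ha0)
        rw [Matrix.updateRow_self, Matrix.updateRow_ne ha0]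
      rw [hzero, add_zero]
  have h0 : (0 : Fin (N+1)) ∉ Finset.univ.erase 0 := by simp
  have := claim _ h0
  rwa [Finset.add_sum_erase _ (fun i => M i) (Finset.mem_univ 0)] at this

lemma det_updateRow_adj {n' : Type*} [Fintype n'] [DecidableEq n']
    (M : Matrix n' n' R) (v : n' → R) (k : n') :
    (M.updateRow k v).det = ∑ j, v j * adjugate M j k := by
  have hv : v = ∑ j, Pi.single j (v j) := by
    rw [Finset.univ_sum_single v]
  conv_lhs => rw [hv]
  rw [det_updateRow_sum_gen]
  apply Finset.sum_congr rfl
  intro j _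
  have hsingle : (Pi.single j (v j) : n' → R) = (v j) • (Pi.single j (1:R) : n' → R) := by
    funext l
    rcases eq_or_ne l j with rfl | h
    · simp
    · simp [Pi.single_eq_of_ne h]
  rw [hsingle, Matrix.det_updateRow_smul, Matrix.adjugate_apply]
end

lemma det_poly {N : ℕ} (d : Fin (N+1) → ℝ) (E : Matrix (Fin (N+1)) (Fin (N+1)) ℝ)
    (hE : ∀ j, ∑ i, E i j = 0) :
    ∃ p : Polynomial ℝ, (∀ m : ℝ, p.eval m = (Matrix.diagonal d + m • E).det)
      ∧ p.natDegree ≤ N ∧ p.coeff N = (E.updateRow 0 d).det := by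
  classical
  set Mp : Matrix (Fin (N+1)) (Fin (N+1)) (Polynomial ℝ) :=
    Matrix.of (fun i j => C (Matrix.diagonal d i j) + X * C (E i j)) with hMp
  have hrow : (∑ i, Mp i) = fun j => C (d j) := by
    funext j
    erw [Finset.sum_apply]
    have : ∀ i, Mp i j = C (Matrix.diagonal d i j) + X * C (E i j) := fun i => rfl
    simp_rw [this]
    rw [Finset.sum_add_distrib, ← Finset.mul_sum, ← map_sum, ← map_sum]
    have h1 : ∑ i, Matrix.diagonal d i j = d j := by
      rw [Finset.sum_eq_single j]
      · simp
      · intro b _ hb; exact Matrix.diagonal_apply_ne d hb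
      · intro h; exact absurd (Finset.mem_univ _) h
    rw [h1, hE j]
    simp
  set Mp' := Mp.updateRow 0 (fun j => C (d j)) with hMp'
  have hentry : ∀ (σ : Equiv.Perm (Fin (N+1))) (j : Fin (N+1)), σ j ≠ 0 →
      Mp' (σ j) j = C (Matrix.diagonal d (σ j) j) + X * C (E (σ j) j) := by
    intro σ j hne
    rw [hMp', Matrix.updateRow_ne hne]
    rfl
  have hdeg1 : ∀ (σ : Equiv.Perm (Fin (N+1))), ∀ j ∈ Finset.univ.erase (σ⁻¹ 0),
      (Mp' (σ j) j).natDegree ≤ 1 := by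
    intro σ j hj
    have hne : σ j ≠ 0 := by
      intro hc
      exact (Finset.ne_of_mem_erase hj) (by rw [← hc, (show σ⁻¹ (σ j) = j from Equiv.symm_apply_apply σ j)])
    rw [hentry σ j hne]
    apply le_trans (Polynomial.natDegree_add_le _ _)
    apply max_le
    · simp
    · apply le_trans (Polynomial.natDegree_mul_le)
      simp
  have hentry0 : ∀ (σ : Equiv.Perm (Fin (N+1))), Mp' (σ (σ⁻¹ 0)) (σ⁻¹ 0) = C (d (σ⁻¹ 0)) := by
    intro σ
    erw [(show σ (σ⁻¹ 0) = 0 from Equiv.apply_symm_apply σ 0), hMp']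
    rw [show Mp.updateRow 0 (fun j => C (d j)) 0 = fun j => C (d j) from Matrix.updateRow_self]
  have hsplit : ∀ (σ : Equiv.Perm (Fin (N+1))), (∏ j, Mp' (σ j) j)
      = Mp' (σ (σ⁻¹ 0)) (σ⁻¹ 0) * ∏ j ∈ Finset.univ.erase (σ⁻¹ 0), Mp' (σ j) j := by
    intro σ
    exact (Finset.mul_prod_erase _ _ (Finset.mem_univ _)).symm
  have hcard : ∀ σ : Equiv.Perm (Fin (N+1)), (Finset.univ.erase (σ⁻¹ 0)).card = N := by
    intro σ
    rw [Finset.card_erase_of_mem (Finset.mem_univ _)]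
    simp
  have hproddeg : ∀ σ : Equiv.Perm (Fin (N+1)), (∏ j, Mp' (σ j) j).natDegree ≤ N := by
    intro σ
    rw [hsplit σ, hentry0 σ]
    apply le_trans (Polynomial.natDegree_mul_le)
    rw [Polynomial.natDegree_C, zero_add]
    apply le_trans (Polynomial.natDegree_prod_le _ _)
    calc ∑ j ∈ Finset.univ.erase (σ⁻¹ 0), (Mp' (σ j) j).natDegree
        ≤ ∑ _j ∈ Finset.univ.erase (σ⁻¹ 0), 1 := Finset.sum_le_sum (hdeg1 σ)
      _ = N := by rw [Finset.sum_const, hcard σ, smul_eq_mul, mul_one]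
  have hcoeff : ∀ σ : Equiv.Perm (Fin (N+1)), (∏ j, Mp' (σ j) j).coeff N
      = d (σ⁻¹ 0) * ∏ j ∈ Finset.univ.erase (σ⁻¹ 0), E (σ j) j := by
    intro σ
    rw [hsplit σ, hentry0 σ, Polynomial.coeff_C_mul]
    congr 1
    have hc := Polynomial.coeff_prod_of_natDegree_le (s := Finset.univ.erase (σ⁻¹ 0))
      (fun j => Mp' (σ j) j) 1 (hdeg1 σ)
    rw [hcard σ, mul_one] at hc
    rw [hc]
    apply Finset.prod_congr rfl
    intro j hj
    have hne : σ j ≠ 0 := by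
      intro hc2
      exact (Finset.ne_of_mem_erase hj) (by rw [← hc2, (show σ⁻¹ (σ j) = j from Equiv.symm_apply_apply σ j)])
    show (Mp' (σ j) j).coeff 1 = E (σ j) j
    rw [hentry σ j hne]
    rw [Polynomial.coeff_add, Polynomial.coeff_C]
    simp only [one_ne_zero, if_false, zero_add]
    simp
  have hMp'eq : Mp' = Mp.updateRow 0 (∑ i, Mp i) := by rw [hrow]
  refine ⟨Mp'.det, ?_, ?_, ?_⟩
  · intro m
    rw [hMp'eq, row_replace, ← Polynomial.coe_evalRingHom, RingHom.map_det]
    congr 1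
    funext i j
    simp only [hMp, RingHom.mapMatrix_apply, Matrix.map_apply, Matrix.of_apply,
      Polynomial.coe_evalRingHom, Polynomial.eval_add, Polynomial.eval_C,
      Polynomial.eval_mul, Polynomial.eval_X, Matrix.add_apply, Matrix.smul_apply, smul_eq_mul]
  · -- natDegree bound
    rw [Matrix.det_apply']
    apply Polynomial.natDegree_sum_le_of_forall_le
    intro σ _
    have h1 : (((Equiv.Perm.sign σ : ℤ) : Polynomial ℝ)).natDegree = 0 := by
      rw [← Polynomial.C_eq_intCast]; exact Polynomial.natDegree_C _
    apply le_trans (Polynomial.natDegree_mul_le)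
    rw [h1, zero_add]
    exact hproddeg σ
  · rw [Matrix.det_apply', Polynomial.finset_sum_coeff, Matrix.det_apply' (E.updateRow 0 d)]
    apply Finset.sum_congr rfl
    intro σ _
    rw [← Polynomial.C_eq_intCast, Polynomial.coeff_C_mul]
    congr 1
    rw [hcoeff σ]
    have hsplit2 : (∏ j, (E.updateRow 0 d) (σ j) j)
        = (E.updateRow 0 d) (σ (σ⁻¹ 0)) (σ⁻¹ 0)
          * ∏ j ∈ Finset.univ.erase (σ⁻¹ 0), (E.updateRow 0 d) (σ j) j :=
      (Finset.mul_prod_erase _ _ (Finset.mem_univ _)).symm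
    erw [hsplit2, (show σ (σ⁻¹ 0) = 0 from Equiv.apply_symm_apply σ 0)]
    have h0 : (E.updateRow 0 d) 0 (σ⁻¹ 0) = d (σ⁻¹ 0) := by
      rw [Matrix.updateRow_self]
    rw [h0]
    congr 1
    apply Finset.prod_congr rfl
    intro j hj
    have hne : σ j ≠ 0 := by
      intro hc
      have : j = σ⁻¹ 0 := by
        rw [← hc, (show σ⁻¹ (σ j) = j from Equiv.symm_apply_apply σ j)]
      exact (Finset.ne_of_mem_erase hj) this
    rw [Matrix.updateRow_ne hne]

section
variable {N : ℕ} {L : Matrix (Fin (N+1)) (Fin (N+1)) ℝ} {r : Fin (N+1) → ℝ}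
  {q : Fin (N+1) → ℝ}

lemma lower_evt (hM : Metzler L) (hirr : Irred L) (hcol : ∀ j, ∑ i, L i j = 0)
    (hq : ∀ i, 0 < q i) (hLq : L *ᵥ q = 0) (hqs : ∑ i, q i = 1)
    {a : ℝ} (ha : a < ∑ i, q i * r i) :
    ∀ᶠ m : ℝ in Filter.atTop, a < specAbscissa (Matrix.diagonal r + m • L) := by
  set S : ℝ := ∑ i, q i * r i with hS
  set c : ℝ := (a + S)/2 with hc
  have hac : a < c := by rw [hc]; linarith
  have hcS : c < S := by rw [hc]; linarith
  obtain ⟨β, hβ, hβpos⟩ := adj_struct hM hirr hcol hq hLq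
  have hEcol : ∀ j, ∑ i, (-L) i j = 0 := by
    intro j
    simp only [Matrix.neg_apply]
    rw [Finset.sum_neg_distrib, hcol j, neg_zero]
  obtain ⟨p, hpeval, hpdeg, hpcoeff⟩ := det_poly (fun j => c - r j) (-L) hEcol
  -- compute the top coefficient
  have hupd : ((-L).updateRow 0 (fun j => c - r j))
      = -(L.updateRow 0 ((-1:ℝ) • (fun j => c - r j))) := by
    funext i j
    rcases eq_or_ne i 0 with rfl | hi
    · simp [Matrix.updateRow_self]
    · simp [Matrix.updateRow_ne hi]
  have hdetG : ((-L).updateRow 0 (fun j => c - r j)).det = (-1:ℝ)^N * (β * (c - S)) := by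
    rw [hupd, Matrix.det_neg, Matrix.det_updateRow_smul, Fintype.card_fin]
    rw [det_updateRow_adj]
    have hsum : ∑ j, (c - r j) * adjugate L j 0 = β * (c - S) := by
      have : ∀ j, (c - r j) * adjugate L j 0 = β * (c * q j - q j * r j) := by
        intro j
        rw [hβ j 0]
        ring
      rw [Finset.sum_congr rfl (fun j _ => this j), ← Finset.mul_sum]
      congr 1
      rw [Finset.sum_sub_distrib, ← Finset.mul_sum, hqs, hS]
      ring
    rw [hsum]
    ring_nf
  have hco : p.coeff N < 0 := by
    rw [hpcoeff, hdetG]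
    have : (-1:ℝ)^N * (β * (c - S)) = ((-1:ℝ)^N * β) * (c - S) := by ring
    rw [this]
    exact mul_neg_of_pos_of_neg hβpos (by linarith)
  have hev : ∀ᶠ m in atTop, p.eval m < 0 := by
    rcases Nat.eq_zero_or_pos N with hN | hN
    · have hpC : p = C (p.coeff 0) := by
        apply Polynomial.eq_C_of_natDegree_le_zero
        rw [← hN]; exact hpdeg
      filter_upwards with m
      rw [hpC]
      simp only [Polynomial.eval_C]
      rw [← hN]
      exact hco
    · have hne : p ≠ 0 := by
        intro h
        rw [h] at hco
        simp at hco
      have hdeg : p.natDegree = N :=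
        le_antisymm hpdeg (Polynomial.le_natDegree_of_ne_zero (ne_of_lt hco))
      have hlead : p.leadingCoeff ≤ 0 := by
        rw [Polynomial.leadingCoeff, hdeg]; exact hco.le
      have hdpos : 0 < p.degree := by
        rw [Polynomial.degree_eq_natDegree hne, hdeg]
        exact_mod_cast hN
      exact (Polynomial.tendsto_atBot_of_leadingCoeff_nonpos p hdpos hlead).eventually_lt_atBot 0
  filter_upwards [hev] with m hm
  set A := Matrix.diagonal r + m • L with hA
  have hdetc : (A.charpoly).eval c < 0 := by
    rw [eval_charpoly']
    have heq : c • (1 : Matrix (Fin (N+1)) (Fin (N+1)) ℝ) - A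
        = Matrix.diagonal (fun j => c - r j) + m • (-L) := by
      funext i j
      rcases eq_or_ne i j with rfl | hij
      · simp [hA, Matrix.one_apply, Matrix.diagonal_apply]
        ring
      · simp [hA, Matrix.one_apply_ne hij, Matrix.diagonal_apply_ne _ hij,
          Matrix.diagonal_apply_ne' _ (Ne.symm hij)]
    rw [heq, ← hpeval m]
    exact hm
  have hmonic := Matrix.charpoly_monic A
  have hdegA : A.charpoly.natDegree = N + 1 := by
    rw [Matrix.charpoly_natDegree_eq_dim, Fintype.card_fin]
  have hinfty : Filter.Tendsto (fun x => A.charpoly.eval x) atTop atTop := by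
    apply Polynomial.tendsto_atTop_of_leadingCoeff_nonneg
    · rw [Polynomial.degree_eq_natDegree hmonic.ne_zero, hdegA]
      exact_mod_cast Nat.succ_pos N
    · rw [hmonic.leadingCoeff]; norm_num
  obtain ⟨x2, hx2pos, hx2ge⟩ :=
    ((hinfty.eventually_gt_atTop 0).and (eventually_ge_atTop c)).exists
  have hIcc : (0:ℝ) ∈ Set.Icc (A.charpoly.eval c) (A.charpoly.eval x2) :=
    ⟨hdetc.le, hx2pos.le⟩
  obtain ⟨x1, hx1mem, hx1⟩ := intermediate_value_Icc hx2ge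
    ((Polynomial.continuous A.charpoly).continuousOn) hIcc
  have hroot : ((A.map (fun a => (a : ℂ))).charpoly).IsRoot (x1 : ℂ) := by
    have hdet0 : (x1 • (1 : Matrix (Fin (N+1)) (Fin (N+1)) ℝ) - A).det = 0 := by
      rw [← eval_charpoly']
      exact hx1
    have hdet0' : (((x1:ℂ)) • (1 : Matrix (Fin (N+1)) (Fin (N+1)) ℂ)
        - A.map (fun a => (a : ℂ))).det = 0 := by
      have h2 := congrArg (Complex.ofRealHom) hdet0
      rw [RingHom.map_det, RingHom.mapMatrix_apply] at h2
      have h3 : (x1 • (1 : Matrix (Fin (N+1)) (Fin (N+1)) ℝ) - A).map Complex.ofRealHom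
          = ((x1:ℂ)) • (1 : Matrix (Fin (N+1)) (Fin (N+1)) ℂ) - A.map (fun a => (a : ℂ)) := by
        funext i j
        rcases eq_or_ne i j with rfl | hij
        · simp [Matrix.one_apply, Matrix.map_apply]
        · simp [Matrix.one_apply_ne hij, Matrix.map_apply]
      rw [h3] at h2
      rw [h2]
      simp
    rw [Polynomial.IsRoot, eval_charpoly']
    exact hdet0'
  have hle := le_specAbscissa A hroot
  simp only [Complex.ofReal_re] at hle
  have : c ≤ x1 := hx1mem.1
  linarith
end

section
variable {N : ℕ} {L : Matrix (Fin (N+1)) (Fin (N+1)) ℝ} {r : Fin (N+1) → ℝ}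
  {q : Fin (N+1) → ℝ}

lemma exists_u (hM : Metzler L) (hirr : Irred L)
    (hq : ∀ i, 0 < q i) (hLq : L *ᵥ q = 0) (hqs : ∑ i, q i = 1) (d : Fin (N+1) → ℝ)
    (hd : ∑ j, q j * d j = 0) : ∃ u : Fin (N+1) → ℝ, Lᵀ *ᵥ u = d := by
  classical
  have hqne : q ≠ 0 := fun h => (ne_of_gt (hq 0)) (congrFun h 0)
  -- kernel of L is the span of q
  have hker : LinearMap.ker (Matrix.mulVecLin L) = Submodule.span ℝ {q} := by
    apply le_antisymm
    · intro x hx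
      rw [LinearMap.mem_ker, Matrix.mulVecLin_apply] at hx
      obtain ⟨c, hc⟩ := ker_eq_span hM hirr hq hLq hx
      rw [Submodule.mem_span_singleton]
      exact ⟨c, hc.symm⟩
    · rw [Submodule.span_le]
      intro x hx
      rw [Set.mem_singleton_iff] at hx
      subst hx
      rw [SetLike.mem_coe, LinearMap.mem_ker, Matrix.mulVecLin_apply]
      exact hLq
  have hkerrank : Module.finrank ℝ (LinearMap.ker (Matrix.mulVecLin L)) = 1 := by
    rw [hker]
    exact finrank_span_singleton hqne
  have hdim : Module.finrank ℝ (Fin (N+1) → ℝ) = N + 1 := by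
    rw [Module.finrank_pi]
    simp
  have hrangeL : Module.finrank ℝ (LinearMap.range (Matrix.mulVecLin L)) = N := by
    have := LinearMap.finrank_range_add_finrank_ker (Matrix.mulVecLin L)
    rw [hkerrank, hdim] at this
    omega
  have hrankL : L.rank = N := hrangeL
  have hrankLT : Lᵀ.rank = N := by rw [Matrix.rank_transpose]; exact hrankL
  have hrangeLT : Module.finrank ℝ (LinearMap.range (Matrix.mulVecLin Lᵀ)) = N := hrankLT
  -- the functional x ↦ ∑ q i * x i
  let lq : (Fin (N+1) → ℝ) →ₗ[ℝ] ℝ :=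
    { toFun := fun x => ∑ i, q i * x i
      map_add' := by
        intro x y
        simp only [Pi.add_apply, mul_add]
        rw [Finset.sum_add_distrib]
      map_smul' := by
        intro c x
        simp only [Pi.smul_apply, smul_eq_mul, RingHom.id_apply]
        rw [Finset.mul_sum]
        apply Finset.sum_congr rfl
        intros; ring }
  have hlqq : lq q ≠ 0 := by
    have : 0 < ∑ i, q i * q i :=
      Finset.sum_pos (fun i _ => mul_pos (hq i) (hq i)) ⟨0, Finset.mem_univ 0⟩
    exact ne_of_gt this
  have hsub : LinearMap.range (Matrix.mulVecLin Lᵀ) ≤ LinearMap.ker lq := by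
    rintro x ⟨u, rfl⟩
    rw [LinearMap.mem_ker]
    show ∑ i, q i * (Matrix.mulVecLin Lᵀ u) i = 0
    simp only [Matrix.mulVecLin_apply]
    have hswap : ∑ i, q i * (Lᵀ *ᵥ u) i = ∑ j, (L *ᵥ q) j * u j := by
      simp only [Matrix.mulVec, dotProduct, Matrix.transpose_apply]
      calc ∑ i, q i * ∑ j, L j i * u j
          = ∑ i, ∑ j, q i * (L j i * u j) := by simp_rw [Finset.mul_sum]
        _ = ∑ j, ∑ i, q i * (L j i * u j) := Finset.sum_comm
        _ = ∑ j, (∑ i, L j i * q i) * u j := by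
            apply Finset.sum_congr rfl
            intro j _
            rw [Finset.sum_mul]
            apply Finset.sum_congr rfl
            intros; ring
    rw [hswap, hLq]
    simp
  have hkerlq_le : Module.finrank ℝ (LinearMap.ker lq) ≤ N := by
    by_contra hcon
    push_neg at hcon
    have hle : Module.finrank ℝ (LinearMap.ker lq) ≤ N + 1 := by
      have h := Submodule.finrank_le (LinearMap.ker lq)
      rwa [hdim] at h
    have heq : Module.finrank ℝ (LinearMap.ker lq) = N + 1 := le_antisymm hle hcon
    have htop : LinearMap.ker lq = ⊤ := Submodule.eq_top_of_finrank_eq (by rw [heq, hdim])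
    have hz : lq q = 0 := by
      rw [← LinearMap.mem_ker, htop]
      trivial
    exact hlqq hz
  have hrange_eq : LinearMap.range (Matrix.mulVecLin Lᵀ) = LinearMap.ker lq :=
    Submodule.eq_of_le_of_finrank_le hsub (by rw [hrangeLT]; exact hkerlq_le)
  have hdmem : d ∈ LinearMap.ker lq := by rw [LinearMap.mem_ker]; exact hd
  rw [← hrange_eq] at hdmem
  obtain ⟨u, hu⟩ := hdmem
  refine ⟨u, ?_⟩
  rw [← Matrix.mulVecLin_apply]
  exact hu

lemma upper_evt (hM : Metzler L) (hirr : Irred L) (hcol : ∀ j, ∑ i, L i j = 0)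
    (hq : ∀ i, 0 < q i) (hLq : L *ᵥ q = 0) (hqs : ∑ i, q i = 1)
    {b : ℝ} (hb : ∑ i, q i * r i < b) :
    ∀ᶠ m : ℝ in Filter.atTop, specAbscissa (Matrix.diagonal r + m • L) < b := by
  set S : ℝ := ∑ i, q i * r i with hS
  set ε : ℝ := (b - S)/2 with hε
  have hεpos : 0 < ε := by rw [hε]; linarith
  have hSεb : S + ε < b := by rw [hε]; linarith
  obtain ⟨u, hu⟩ := exists_u hM hirr hq hLq hqs (fun j => S - r j) (by
    simp_rw [mul_sub]
    rw [Finset.sum_sub_distrib, ← Finset.sum_mul, hqs, one_mul, ← hS]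
    ring)
  have htend : ∀ C : ℝ, Filter.Tendsto (fun m : ℝ => C / m) atTop (nhds 0) :=
    fun C => Filter.Tendsto.div_atTop tendsto_const_nhds tendsto_id
  have hwpos : ∀ᶠ m : ℝ in atTop, ∀ i, 0 < 1 + u i / m := by
    rw [Filter.eventually_all]
    intro i
    filter_upwards [(htend (u i)).eventually (eventually_gt_nhds (by norm_num : (-1:ℝ) < 0))]
      with m hm
    linarith
  have hineq : ∀ᶠ m : ℝ in atTop, ∀ j, ((r j - (S + ε)) * u j) / m ≤ ε := by
    rw [Filter.eventually_all]
    intro j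
    filter_upwards [(htend ((r j - (S + ε)) * u j)).eventually
      (eventually_lt_nhds hεpos)] with m hm
    exact hm.le
  filter_upwards [hwpos, hineq, eventually_gt_atTop (0:ℝ)] with m hw hj hm
  set w : Fin (N+1) → ℝ := fun i => 1 + u i / m with hwdef
  have hmetz : Metzler (Matrix.diagonal r + m • L) := by
    intro i j hij
    rw [Matrix.add_apply, Matrix.diagonal_apply_ne _ hij, Matrix.smul_apply, smul_eq_mul,
      zero_add]
    exact mul_nonneg hm.le (hM i j hij)
  have hbound : ∀ j, ∑ i, w i * (Matrix.diagonal r + m • L) i j ≤ (S + ε) * w j := by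
    intro j
    have h1 : ∑ i, w i * (Matrix.diagonal r + m • L) i j
        = w j * r j + m * ∑ i, w i * L i j := by
      simp only [Matrix.add_apply, Matrix.smul_apply, smul_eq_mul, mul_add]
      rw [Finset.sum_add_distrib]
      congr 1
      · rw [Finset.sum_eq_single j]
        · rw [Matrix.diagonal_apply_eq]
        · intro i _ hij
          rw [Matrix.diagonal_apply_ne _ hij, mul_zero]
        · intro h; exact absurd (Finset.mem_univ _) h
      · rw [Finset.mul_sum]
        apply Finset.sum_congr rfl
        intros; ring
    have h2 : ∑ i, w i * L i j = (S - r j) / m := by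
      have hLd : ∑ i, u i * L i j = S - r j := by
        have := congrFun hu j
        simp only [Matrix.mulVec, dotProduct, Matrix.transpose_apply] at this
        rw [← this]
        apply Finset.sum_congr rfl
        intros; ring
      simp only [hwdef]
      simp_rw [add_mul, one_mul]
      rw [Finset.sum_add_distrib, hcol j, zero_add]
      have hdiv : ∀ i, u i / m * L i j = u i * L i j / m := fun i => by ring
      simp_rw [hdiv]
      rw [← Finset.sum_div, hLd]
    have hmne : m ≠ 0 := ne_of_gt hm
    rw [h1, h2]
    have e1 : m * ((S - r j)/m) = S - r j := by field_simp
    rw [e1]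
    have e2 : (r j - (S + ε)) * (u j / m) ≤ ε := by
      rw [← mul_div_assoc]
      exact hj j
    show (1 + u j / m) * r j + (S - r j) ≤ (S + ε) * (1 + u j / m)
    nlinarith [e2]
  have hle := specAbscissa_le (Matrix.diagonal r + m • L) (UB hmetz hw hbound)
  exact lt_of_le_of_lt hle hSεb


theorem stmt10 {n : ℕ} (r : Fin (n + 1) → ℝ) (L : Matrix (Fin (n + 1)) (Fin (n + 1)) ℝ)
    (hM : Metzler L) (hirr : Irred L) (hcol : ∀ j, ∑ i, L i j = 0)
    (q : Fin (n + 1) → ℝ) (hq : ∀ i, 0 < q i) (hLq : L.mulVec q = 0)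
    (hqs : ∑ i, q i = 1) :
    Filter.Tendsto (fun m : ℝ => specAbscissa (Matrix.diagonal r + m • L))
      Filter.atTop (nhds (∑ i, q i * r i)) := by
  rw [tendsto_order]
  constructor
  · intro a ha
    exact lower_evt hM hirr hcol hq hLq hqs ha
  · intro b hb
    exact upper_evt hM hirr hcol hq hLq hqs hb
end
end

section
/- Consider the ±1 two-patch model with constant symmetric migration m and piecewise constant rates: r_1 = 1−ε on [0,½), −1−ε on [½,1), and r_2 swapped, with 0 < ε < 1. Then the slow-regime limit of the growth rate is Λ(m,∞) = −ε + √(1+m²) − m; in particular Λ(m,∞) > 0 if and only if m < (1−ε²)/(2ε). -/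
open Matrix Polynomial

lemma spec2 (a b c : ℝ) :
    specAbscissa !![a, c; c, b]
      = (a + b) / 2 + Real.sqrt (((a - b) / 2) ^ 2 + c ^ 2) := by
  set d := Real.sqrt (((a - b) / 2) ^ 2 + c ^ 2) with hd
  have hd0 : 0 ≤ d := Real.sqrt_nonneg _
  have hd2 : d ^ 2 = ((a - b) / 2) ^ 2 + c ^ 2 := Real.sq_sqrt (by positivity)
  set s₁ : ℝ := (a + b) / 2 + d
  set s₂ : ℝ := (a + b) / 2 - d
  have hsum : s₁ + s₂ = a + b := by ring
  have hprod : s₁ * s₂ = a * b - c ^ 2 := by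
    have : s₁ * s₂ = ((a + b) / 2) ^ 2 - d ^ 2 := by ring
    rw [this, hd2]; ring
  have hcp : ((!![a, c; c, b] : Matrix (Fin 2) (Fin 2) ℝ).map (fun x => (x : ℂ))).charpoly
      = X ^ 2 - Polynomial.C ((a + b : ℝ) : ℂ) * X + Polynomial.C ((a * b - c ^ 2 : ℝ) : ℂ) := by
    rw [Matrix.charpoly, Matrix.det_fin_two]
    simp [Matrix.charmatrix_apply, Matrix.map_apply, Matrix.one_apply]
    ring
  have hroot : ∀ μ : ℂ, ((!![a, c; c, b] : Matrix (Fin 2) (Fin 2) ℝ).map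
        (fun x => (x : ℂ))).charpoly.IsRoot μ ↔ (μ = s₁ ∨ μ = s₂) := by
    intro μ
    rw [hcp]
    simp only [Polynomial.IsRoot, Polynomial.eval_add, Polynomial.eval_sub,
      Polynomial.eval_mul, Polynomial.eval_pow, Polynomial.eval_X, Polynomial.eval_C]
    constructor
    · intro h
      have : (μ - s₁) * (μ - s₂) = 0 := by
        have h1 : ((s₁ : ℝ) : ℂ) + s₂ = ((a + b : ℝ) : ℂ) := by push_cast [← hsum]; ring
        have h2 : ((s₁ : ℝ) : ℂ) * s₂ = ((a * b - c ^ 2 : ℝ) : ℂ) := by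
          push_cast [← hprod]; ring
        calc (μ - s₁) * (μ - s₂)
            = μ ^ 2 - (((s₁:ℝ):ℂ) + s₂) * μ + ((s₁:ℝ):ℂ) * s₂ := by ring
          _ = μ ^ 2 - ((a + b : ℝ):ℂ) * μ + ((a * b - c ^ 2 : ℝ):ℂ) := by rw [h1, h2]
          _ = 0 := h
      rcases mul_eq_zero.mp this with h' | h'
      · exact Or.inl (by linear_combination h')
      · exact Or.inr (by linear_combination h')
    · have k1 : s₁ ^ 2 - (a + b) * s₁ + (a * b - c ^ 2) = 0 := by
        simp only [s₁]; linear_combination hd2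
      have k2 : s₂ ^ 2 - (a + b) * s₂ + (a * b - c ^ 2) = 0 := by
        simp only [s₂]; linear_combination hd2
      have k1' := congrArg (fun x : ℝ => (x : ℂ)) k1
      have k2' := congrArg (fun x : ℝ => (x : ℂ)) k2
      push_cast at k1' k2'
      rintro (rfl | rfl)
      · push_cast; linear_combination k1'
      · push_cast; linear_combination k2'
  have hset : {t : ℝ | ∃ μ : ℂ, ((!![a, c; c, b] : Matrix (Fin 2) (Fin 2) ℝ).map
        (fun x => (x : ℂ))).charpoly.IsRoot μ ∧ t = μ.re} = {s₁, s₂} := by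
    ext t
    simp only [Set.mem_setOf_eq, Set.mem_insert_iff, Set.mem_singleton_iff]
    constructor
    · rintro ⟨μ, hμ, rfl⟩
      rcases (hroot μ).mp hμ with rfl | rfl
      · exact Or.inl (Complex.ofReal_re _)
      · exact Or.inr (Complex.ofReal_re _)
    · rintro (rfl | rfl)
      · exact ⟨s₁, (hroot _).mpr (Or.inl rfl), (Complex.ofReal_re _).symm⟩
      · exact ⟨s₂, (hroot _).mpr (Or.inr rfl), (Complex.ofReal_re _).symm⟩
  rw [specAbscissa, hset, csSup_pair]
  simp only [s₁, s₂]
  rw [sup_eq_left.mpr (by linarith)]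

lemma mat_eq (x y c : ℝ) :
    Matrix.diagonal ![x, y] + c • (!![-1, 1; 1, -1] : Matrix (Fin 2) (Fin 2) ℝ)
      = !![x - c, c; c, y - c] := by
  ext i j
  fin_cases i <;> fin_cases j <;>
    simp [Matrix.diagonal, Matrix.smul_apply] <;> ring

theorem stmt18 (ε m : ℝ) (hε0 : 0 < ε) (hε1 : ε < 1) (hm : 0 < m) :
    let L : Matrix (Fin 2) (Fin 2) ℝ := !![-1, 1; 1, -1]
    let r1 : ℝ → ℝ := fun τ => if τ < 1 / 2 then 1 - ε else -1 - ε
    let r2 : ℝ → ℝ := fun τ => if τ < 1 / 2 then -1 - ε else 1 - ε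
    (∫ τ in (0 : ℝ)..1, specAbscissa (Matrix.diagonal ![r1 τ, r2 τ] + m • L)) =
      -ε + Real.sqrt (1 + m ^ 2) - m ∧
    (0 < -ε + Real.sqrt (1 + m ^ 2) - m ↔ m < (1 - ε ^ 2) / (2 * ε)) := by
  intro L r1 r2
  constructor
  · have hfun : ∀ τ : ℝ, specAbscissa (Matrix.diagonal ![r1 τ, r2 τ] + m • L)
        = -ε + Real.sqrt (1 + m ^ 2) - m := by
      intro τ
      rw [show Matrix.diagonal ![r1 τ, r2 τ] + m • L = !![r1 τ - m, m; m, r2 τ - m] from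
        mat_eq _ _ _, spec2]
      have key : ∀ u v : ℝ, (((u - m) - (v - m)) / 2) ^ 2 + m ^ 2
          = ((u - v) / 2) ^ 2 + m ^ 2 := fun u v => by ring
      by_cases h : τ < 1 / 2
      · simp only [r1, r2, if_pos h]
        rw [key]; norm_num; ring
      · simp only [r1, r2, if_neg h]
        rw [key]; norm_num; ring
    simp only [hfun, intervalIntegral.integral_const]
    simp
  · rw [show (0 < -ε + Real.sqrt (1 + m ^ 2) - m) ↔ ε + m < Real.sqrt (1 + m ^ 2) from
      ⟨fun h => by linarith, fun h => by linarith⟩]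
    rw [show (ε + m < Real.sqrt (1 + m ^ 2)) ↔ (ε + m) ^ 2 < 1 + m ^ 2 from
      Real.lt_sqrt (by positivity)]
    rw [lt_div_iff₀ (by positivity)]
    constructor <;> intro h <;> nlinarith
end

section
/- Let A and B be the 3×3 Metzler matrices A = [[−1,0,0],[10,−1,0],[0,0,−10]] and B = [[−10,0,10],[0,−10,0],[0,10,−1]]. Then λ_max(A) < 0, λ_max(B) < 0, and λ_max((A+B)/2) < 0, yet the matrix e^A e^B has spectral radius strictly greater than 1. -/
open Matrix

/-- Spectral radius of a real matrix: the supremum of the moduli of its complex eigenvalues. -/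
noncomputable def specRadius {n : ℕ} (A : Matrix (Fin n) (Fin n) ℝ) : ℝ :=
  sSup {t : ℝ | ∃ μ : ℂ, (A.map (fun a => (a : ℂ))).charpoly.IsRoot μ ∧ t = ‖μ‖}

set_option maxHeartbeats 2000000

open Polynomial in
lemma eval_charpoly_det' {R : Type*} [CommRing R] {n : ℕ} (M : Matrix (Fin n) (Fin n) R) (t : R) :
    (M.charpoly).eval t = (t • (1 : Matrix (Fin n) (Fin n) R) - M).det := by
  have h : (Polynomial.evalRingHom t) (Matrix.charmatrix M).det
      = ((Matrix.charmatrix M).map (Polynomial.evalRingHom t)).det := RingHom.map_det _ _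
  simp only [coe_evalRingHom] at h
  rw [Matrix.charpoly, h]
  congr 1
  ext i j
  by_cases hij : i = j
  · subst hij
    simp [Matrix.charmatrix_apply_eq, Matrix.map_apply, Matrix.one_apply, Matrix.smul_apply]
  · simp [Matrix.charmatrix_apply_ne _ _ _ hij, Matrix.map_apply, Matrix.one_apply_ne hij,
      Matrix.smul_apply, Matrix.sub_apply]

lemma sSup_re_lt_zero' (q : Polynomial ℂ) (hq : q ≠ 0) (μ₀ : ℂ) (h₀ : q.IsRoot μ₀)
    (hneg : ∀ μ : ℂ, q.IsRoot μ → μ.re < 0) :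
    sSup {t : ℝ | ∃ μ : ℂ, q.IsRoot μ ∧ t = μ.re} < 0 := by
  set S := {t : ℝ | ∃ μ : ℂ, q.IsRoot μ ∧ t = μ.re} with hS
  have hSim : S = (fun μ : ℂ => μ.re) '' {μ | q.IsRoot μ} := by
    ext t
    simp only [hS, Set.mem_setOf_eq, Set.mem_image]
    constructor
    · rintro ⟨μ, h1, h2⟩; exact ⟨μ, h1, h2.symm⟩
    · rintro ⟨μ, h1, h2⟩; exact ⟨μ, h1, h2.symm⟩
  have hfin : S.Finite := by
    rw [hSim]; exact (Polynomial.finite_setOf_isRoot hq).image _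
  have hne : S.Nonempty := ⟨μ₀.re, μ₀, h₀, rfl⟩
  obtain ⟨μ, hμ, ht⟩ := hne.csSup_mem hfin
  rw [ht]
  exact hneg μ hμ

lemma exp_sq_zero' (N : Matrix (Fin 3) (Fin 3) ℝ) (h : N * N = 0) :
    NormedSpace.exp N = 1 + N := by
  have hpow : ∀ k, 2 ≤ k → N ^ k = 0 := by
    intro k hk
    obtain ⟨m, rfl⟩ := Nat.exists_eq_add_of_le hk
    rw [pow_add, pow_two, h, zero_mul]
  rw [NormedSpace.exp_eq_tsum ℝ]
  simp only []
  show (∑' n : ℕ, ((n.factorial : ℝ))⁻¹ • N ^ n) = 1 + N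
  rw [tsum_eq_sum (s := Finset.range 2) (fun k hk => by
    rw [hpow k (by simp at hk; omega), smul_zero])]
  norm_num [Finset.sum_range_succ]

lemma exp_triangular' (d₁ d₂ d₃ : ℝ)
    (N : Matrix (Fin 3) (Fin 3) ℝ)
    (hN : N * N = 0)
    (hcomm : Commute (Matrix.diagonal ![d₁, d₂, d₃]) N) :
    NormedSpace.exp (Matrix.diagonal ![d₁, d₂, d₃] + N)
      = Matrix.diagonal ![Real.exp d₁, Real.exp d₂, Real.exp d₃] * (1 + N) := by
  rw [Matrix.exp_add_of_commute _ _ hcomm, Matrix.exp_diagonal, exp_sq_zero' N hN]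
  have hv : NormedSpace.exp (![d₁, d₂, d₃]) = ![Real.exp d₁, Real.exp d₂, Real.exp d₃] := by
    funext i; fin_cases i <;> simp [Real.exp_eq_exp_ℝ]
  rw [hv]

lemma expA' : NormedSpace.exp (!![-1, 0, 0; 10, -1, 0; 0, 0, -10] : Matrix (Fin 3) (Fin 3) ℝ)
    = !![Real.exp (-1), 0, 0; 10 * Real.exp (-1), Real.exp (-1), 0; 0, 0, Real.exp (-10)] := by
  have hsplit : (!![-1, 0, 0; 10, -1, 0; 0, 0, -10] : Matrix (Fin 3) (Fin 3) ℝ)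
      = Matrix.diagonal ![-1, -1, -10] + !![0,0,0;10,0,0;0,0,0] := by
    ext i j; fin_cases i <;> fin_cases j <;>
      simp [Matrix.diagonal, Matrix.vecHead, Matrix.vecTail]
  rw [hsplit, exp_triangular' _ _ _ _ ?_ ?_]
  · ext i j
    fin_cases i <;> fin_cases j <;>
      simp [Matrix.mul_apply, Fin.sum_univ_three, Matrix.diagonal, Matrix.one_fin_three,
        Matrix.vecHead, Matrix.vecTail] <;> ring
  · ext i j
    fin_cases i <;> fin_cases j <;>
      simp [Matrix.mul_apply, Fin.sum_univ_three, Matrix.vecHead, Matrix.vecTail]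
  · show _ * _ = _ * _
    ext i j
    fin_cases i <;> fin_cases j <;>
      simp [Matrix.mul_apply, Fin.sum_univ_three, Matrix.diagonal, Matrix.vecHead, Matrix.vecTail]

lemma expB' : NormedSpace.exp (!![-10, 0, 10; 0, -10, 0; 0, 10, -1] : Matrix (Fin 3) (Fin 3) ℝ)
    = !![Real.exp (-10), (100 * Real.exp (-1) - 1000 * Real.exp (-10))/81,
          (10 * Real.exp (-1) - 10 * Real.exp (-10))/9;
         0, Real.exp (-10), 0;
         0, (10 * Real.exp (-1) - 10 * Real.exp (-10))/9, Real.exp (-1)] := by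
  set T : Matrix (Fin 3) (Fin 3) ℝ := !![1,0,10; 0,-9/100,0; 0,1/10,9] with hT
  set Ti : Matrix (Fin 3) (Fin 3) ℝ := !![1,-100/81,-10/9; 0,-100/9,0; 0,10/81,1/9] with hTi
  set J : Matrix (Fin 3) (Fin 3) ℝ := !![-10,1,0; 0,-10,0; 0,0,-1] with hJ
  have hTTi : T * Ti = 1 := by
    ext i j
    fin_cases i <;> fin_cases j <;>
      norm_num [hT, hTi, Matrix.mul_apply, Fin.sum_univ_three, Matrix.one_fin_three,
        Matrix.vecHead, Matrix.vecTail, Matrix.cons_val_two]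
  have hTiT : Ti * T = 1 := by
    ext i j
    fin_cases i <;> fin_cases j <;>
      norm_num [hT, hTi, Matrix.mul_apply, Fin.sum_univ_three, Matrix.one_fin_three,
        Matrix.vecHead, Matrix.vecTail, Matrix.cons_val_two]
  have hUnit : IsUnit T := ⟨⟨T, Ti, hTTi, hTiT⟩, rfl⟩
  have hTinv : T⁻¹ = Ti := Matrix.inv_eq_right_inv hTTi
  have hBconj : (!![-10, 0, 10; 0, -10, 0; 0, 10, -1] : Matrix (Fin 3) (Fin 3) ℝ)
      = T * J * T⁻¹ := by
    rw [hTinv]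
    ext i j
    fin_cases i <;> fin_cases j <;>
      norm_num [hT, hTi, hJ, Matrix.mul_apply, Fin.sum_univ_three,
        Matrix.vecHead, Matrix.vecTail, Matrix.cons_val_two]
  have hexpJ : NormedSpace.exp J
      = !![Real.exp (-10), Real.exp (-10), 0; 0, Real.exp (-10), 0; 0, 0, Real.exp (-1)] := by
    have hsplit : J = Matrix.diagonal ![-10, -10, -1] + !![0,1,0;0,0,0;0,0,0] := by
      ext i j; fin_cases i <;> fin_cases j <;>
        simp [hJ, Matrix.diagonal, Matrix.vecHead, Matrix.vecTail]
    rw [hsplit, exp_triangular' _ _ _ _ ?_ ?_]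
    · ext i j
      fin_cases i <;> fin_cases j <;>
        simp [Matrix.mul_apply, Fin.sum_univ_three, Matrix.diagonal, Matrix.one_fin_three,
          Matrix.vecHead, Matrix.vecTail]
    · ext i j
      fin_cases i <;> fin_cases j <;>
        simp [Matrix.mul_apply, Fin.sum_univ_three, Matrix.vecHead, Matrix.vecTail]
    · show _ * _ = _ * _
      ext i j
      fin_cases i <;> fin_cases j <;>
        simp [Matrix.mul_apply, Fin.sum_univ_three, Matrix.diagonal, Matrix.vecHead,
          Matrix.vecTail]
  rw [hBconj, Matrix.exp_conj T J hUnit, hexpJ, hTinv]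
  ext i j
  fin_cases i <;> fin_cases j <;>
    norm_num [hT, hTi, Matrix.mul_apply, Fin.sum_univ_three, Matrix.vecHead, Matrix.vecTail,
      Matrix.cons_val_two] <;>
    ring

theorem stmt19 :
    let A : Matrix (Fin 3) (Fin 3) ℝ := !![-1, 0, 0; 10, -1, 0; 0, 0, -10]
    let B : Matrix (Fin 3) (Fin 3) ℝ := !![-10, 0, 10; 0, -10, 0; 0, 10, -1]
    specAbscissa A < 0 ∧ specAbscissa B < 0 ∧
    specAbscissa ((2 : ℝ)⁻¹ • (A + B)) < 0 ∧
    1 < specRadius (NormedSpace.exp A * NormedSpace.exp B) := by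
  intro A B
  have hA : A = !![-1, 0, 0; 10, -1, 0; 0, 0, -10] := rfl
  have hB : B = !![-10, 0, 10; 0, -10, 0; 0, 10, -1] := rfl
  refine ⟨?_, ?_, ?_, ?_⟩
  · -- specAbscissa A < 0
    unfold specAbscissa
    have key : ∀ μ : ℂ, Polynomial.eval μ ((A.map (fun a => (a : ℂ))).charpoly)
        = (μ + 1) * ((μ + 1) * (μ + 10)) := by
      intro μ
      rw [eval_charpoly_det', Matrix.det_fin_three]
      simp [hA, Matrix.map_apply, Matrix.smul_apply, Matrix.sub_apply, Matrix.one_apply,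
        Matrix.vecHead, Matrix.vecTail]
      ring
    refine sSup_re_lt_zero' _ ((Matrix.charpoly_monic _).ne_zero) (-1) ?_ ?_
    · show Polynomial.eval _ _ = 0
      rw [key]; ring
    · intro μ hμ
      have h := hμ
      rw [Polynomial.IsRoot, key] at h
      rcases mul_eq_zero.mp h with h1 | h2
      · have hμ1 : μ = -1 := by linear_combination h1
        rw [hμ1]; norm_num
      · rcases mul_eq_zero.mp h2 with h1 | h1
        · have hμ1 : μ = -1 := by linear_combination h1
          rw [hμ1]; norm_num
        · have hμ1 : μ = -10 := by linear_combination h1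
          rw [hμ1]; norm_num
  · -- specAbscissa B < 0
    unfold specAbscissa
    have key : ∀ μ : ℂ, Polynomial.eval μ ((B.map (fun a => (a : ℂ))).charpoly)
        = (μ + 10) * ((μ + 10) * (μ + 1)) := by
      intro μ
      rw [eval_charpoly_det', Matrix.det_fin_three]
      simp [hB, Matrix.map_apply, Matrix.smul_apply, Matrix.sub_apply, Matrix.one_apply,
        Matrix.vecHead, Matrix.vecTail]
      ring
    refine sSup_re_lt_zero' _ ((Matrix.charpoly_monic _).ne_zero) (-1) ?_ ?_
    · show Polynomial.eval _ _ = 0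
      rw [key]; ring
    · intro μ hμ
      have h := hμ
      rw [Polynomial.IsRoot, key] at h
      rcases mul_eq_zero.mp h with h1 | h2
      · have hμ1 : μ = -10 := by linear_combination h1
        rw [hμ1]; norm_num
      · rcases mul_eq_zero.mp h2 with h1 | h1
        · have hμ1 : μ = -10 := by linear_combination h1
          rw [hμ1]; norm_num
        · have hμ1 : μ = -1 := by linear_combination h1
          rw [hμ1]; norm_num
  · -- specAbscissa ((2 : ℝ)⁻¹ • (A + B)) < 0
    unfold specAbscissa
    have hC : (2 : ℝ)⁻¹ • (A + B) = !![-11/2, 0, 5; 5, -11/2, 0; 0, 5, -11/2] := by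
      rw [hA, hB]
      ext i j
      fin_cases i <;> fin_cases j <;>
        norm_num [Matrix.smul_apply, Matrix.add_apply, Matrix.vecHead, Matrix.vecTail,
          Matrix.cons_val_two]
    have key : ∀ μ : ℂ, Polynomial.eval μ
        ((((2 : ℝ)⁻¹ • (A + B)).map (fun a => (a : ℂ))).charpoly)
        = (μ + ((11/2 : ℝ) : ℂ))^3 - 125 := by
      intro μ
      rw [eval_charpoly_det', Matrix.det_fin_three, hC]
      simp [Matrix.map_apply, Matrix.smul_apply, Matrix.sub_apply, Matrix.one_apply,
        Matrix.vecHead, Matrix.vecTail]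
      push_cast
      ring
    refine sSup_re_lt_zero' _ ((Matrix.charpoly_monic _).ne_zero) (((-1/2 : ℝ) : ℂ)) ?_ ?_
    · show Polynomial.eval _ _ = 0
      rw [key]
      push_cast
      ring
    · intro μ hμ
      have h := hμ
      rw [Polynomial.IsRoot, key] at h
      have hz : (μ + ((11/2 : ℝ) : ℂ))^3 = 125 := by linear_combination h
      have habs : ‖μ + ((11/2 : ℝ) : ℂ)‖ ^ 3 = 125 := by
        rw [← norm_pow, hz]
        norm_num
      have hnn : 0 ≤ ‖μ + ((11/2 : ℝ) : ℂ)‖ := norm_nonneg _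
      have h5 : ‖μ + ((11/2 : ℝ) : ℂ)‖ = 5 := by
        nlinarith [sq_nonneg (‖μ + ((11/2 : ℝ) : ℂ)‖ - 5),
          sq_nonneg (‖μ + ((11/2 : ℝ) : ℂ)‖ + 5)]
      have hre := Complex.re_le_norm (μ + ((11/2 : ℝ) : ℂ))
      rw [h5] at hre
      simp only [Complex.add_re, Complex.ofReal_re] at hre
      linarith
  · -- spectral radius part
    set a := Real.exp (-1) with ha'
    set b := Real.exp (-10) with hb'
    set M : Matrix (Fin 3) (Fin 3) ℝ := !![a*b, (100*a^2 - 1000*a*b)/81, (10*a^2 - 10*a*b)/9;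
        10*a*b, (1000*a^2 - 9919*a*b)/81, (100*a^2 - 100*a*b)/9;
        0, (10*a*b - 10*b^2)/9, a*b] with hM
    have hprod : NormedSpace.exp A * NormedSpace.exp B = M := by
      rw [hA, hB, expA', expB']
      ext i j
      fin_cases i <;> fin_cases j <;>
        norm_num [hM, Matrix.mul_apply, Fin.sum_univ_three, Matrix.vecHead, Matrix.vecTail,
          Matrix.cons_val_two] <;>
        ring
    rw [hprod]
    unfold specRadius
    -- bounds on a and b
    have hapos : 0 < a := Real.exp_pos _
    have hbpos : 0 < b := Real.exp_pos _
    have hea : a * Real.exp 1 = 1 := by rw [ha', ← Real.exp_add]; norm_num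
    have he1 : (2.7182818283 : ℝ) < Real.exp 1 := Real.exp_one_gt_d9
    have he2 : Real.exp 1 < 2.7182818286 := Real.exp_one_lt_d9
    have ha1 : (0.3678 : ℝ) < a := by nlinarith
    have ha2 : a < 0.3679 := by nlinarith
    have heb : b * Real.exp 10 = 1 := by rw [hb', ← Real.exp_add]; norm_num
    have h10 : (10000 : ℝ) < Real.exp 10 := by
      have h1 : Real.exp 10 = (Real.exp 1) ^ 10 := by
        rw [← Real.exp_nat_mul]; norm_num
      rw [h1]
      calc (10000 : ℝ) < 2.7182818283 ^ 10 := by norm_num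
      _ ≤ (Real.exp 1) ^ 10 := pow_le_pow_left₀ (by norm_num) he1.le 10
    have hb2 : b < 0.0001 := by nlinarith [Real.exp_pos 10]
    have key : ∀ t : ℝ, Polynomial.eval t M.charpoly
        = t^3 + ((9757/81)*a*b - (1000/81)*a^2)*t^2
          + (-(1000/81)*a*b^3 - (7757/81)*a^2*b^2)*t - a^3*b^3 := by
      intro t
      rw [eval_charpoly_det', Matrix.det_fin_three]
      simp [hM, Matrix.smul_apply, Matrix.sub_apply, Matrix.one_apply,
        Matrix.vecHead, Matrix.vecTail]
      ring
    have hb1 : b < 1 := by linarith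
    have ha01 : a < 1 := by linarith
    have hab : a * b < 0.000036790 := by nlinarith
    have haa1 : (0.13527 : ℝ) < a^2 := by nlinarith
    have haa2 : a^2 < 0.13535 := by nlinarith
    have hb3 : b^3 ≤ b := by nlinarith [sq_nonneg b, mul_pos hbpos hbpos]
    have hab3 : a * b^3 < 0.0001 := by nlinarith [pow_pos hbpos 3]
    have hab3pos : 0 < a * b^3 := by positivity
    have ha2b2 : a^2 * b^2 < 0.0001 := by nlinarith [pow_pos hbpos 2, pow_pos hapos 2, sq_nonneg b]
    have ha2b2pos : 0 < a^2 * b^2 := by positivity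
    have ha3b3 : a^3 * b^3 < 0.0001 := by nlinarith [pow_pos hapos 3, pow_pos hbpos 3]
    have ha3b3pos : 0 < a^3 * b^3 := by positivity
    have habpos : 0 < a * b := by positivity
    have hg1 : Polynomial.eval 1 M.charpoly < 0 := by
      rw [key]; nlinarith
    have hg2 : 0 < Polynomial.eval 2 M.charpoly := by
      rw [key]; nlinarith
    -- IVT gives a real root strictly between 1 and 2
    have hcont : ContinuousOn (fun t : ℝ => Polynomial.eval t M.charpoly) (Set.Icc 1 2) :=
      (M.charpoly.continuous).continuousOn
    have hmem : (0:ℝ) ∈ Set.Ioo (Polynomial.eval 1 M.charpoly) (Polynomial.eval 2 M.charpoly) :=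
      ⟨hg1, hg2⟩
    obtain ⟨x, hxIoo, hfx⟩ := intermediate_value_Ioo (by norm_num : (1:ℝ) ≤ 2) hcont hmem
    have hxroot : M.charpoly.IsRoot x := hfx
    have hmapeq : (M.map (fun r : ℝ => (r:ℂ))) = M.map Complex.ofRealHom := rfl
    have hrootC : ((M.map (fun r : ℝ => (r:ℂ))).charpoly).IsRoot ((x:ℝ) : ℂ) := by
      rw [hmapeq, Matrix.charpoly_map]
      exact hxroot.map
    have hq0 : (M.map (fun r : ℝ => (r:ℂ))).charpoly ≠ 0 := (Matrix.charpoly_monic _).ne_zero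
    set S := {t : ℝ | ∃ μ : ℂ, ((M.map (fun r : ℝ => (r:ℂ))).charpoly).IsRoot μ
        ∧ t = ‖μ‖} with hS
    have hSsub : S ⊆ (fun μ : ℂ => ‖μ‖) '' {μ : ℂ | ((M.map (fun r : ℝ => (r:ℂ))).charpoly).IsRoot μ} := by
      rintro t ⟨μ, h1, h2⟩
      exact ⟨μ, h1, h2.symm⟩
    have hbdd : BddAbove S :=
      (((Polynomial.finite_setOf_isRoot hq0).image (fun μ : ℂ => ‖μ‖)).bddAbove).mono hSsub
    have hxS : x ∈ S := ⟨((x:ℝ) : ℂ), hrootC, by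
      rw [Complex.norm_real, Real.norm_eq_abs, abs_of_pos (by linarith [hxIoo.1])]⟩
    calc (1:ℝ) < x := hxIoo.1
    _ ≤ sSup S := le_csSup hbdd hxS
end
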